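/- arXiv:1411.7683 — 4 statements merged into one kernel-verified Lean document; each statement's English description precedes it below -/
import Mathlib

section
/- Let Δ⁺ be the positive roots of a reduced irreducible root system with simple roots Π, and let w be an element of the Weyl group. A subset M ⊆ Δ⁺ equals the inversion set N(w) = {γ ∈ Δ⁺ : w(γ) ∈ −Δ⁺} for some Weyl group element w if and only if both M and Δ⁺ \ M are closed under addition of roots (i.e., if γ₁, γ₂ lie in the subset and γ₁ + γ₂ is a root, then γ₁ + γ₂ lies in the subset). -/
variable {V : Type*} [NormedAddCommGroup V] [InnerProductSpace ℝ V]

/-- Data of a reduced crystallographic root system `Δ` in a Euclidean space, together with a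
choice of positive system `Δ⁺` and the corresponding simple roots `Π`. -/
structure RootSystemData (V : Type*) [NormedAddCommGroup V] [InnerProductSpace ℝ V] where
  roots : Finset V
  pos : Finset V
  simples : Finset V
  zero_not_mem : (0 : V) ∉ roots
  neg_mem : ∀ γ ∈ roots, -γ ∈ roots
  reduced : ∀ γ ∈ roots, ∀ c : ℝ, c • γ ∈ roots → c = 1 ∨ c = -1
  crystallographic : ∀ γ ∈ roots, ∀ δ ∈ roots,
    ∃ n : ℤ, 2 * (inner ℝ γ δ : ℝ) / (inner ℝ δ δ : ℝ) = (n : ℝ)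
  reflect_mem : ∀ γ ∈ roots, ∀ δ ∈ roots,
    γ - (2 * (inner ℝ γ δ : ℝ) / (inner ℝ δ δ : ℝ)) • δ ∈ roots
  pos_subset : pos ⊆ roots
  pos_or_neg : ∀ γ ∈ roots, γ ∈ pos ∨ -γ ∈ pos
  pos_neg_disjoint : ∀ γ ∈ pos, -γ ∉ pos
  simples_subset : simples ⊆ pos
  simples_indep : LinearIndependent ℝ (fun α : {x // x ∈ simples} => (α : V))
  pos_combo : ∀ γ ∈ pos, ∃ c : V → ℕ, γ = ∑ α ∈ simples, (c α : ℝ) • α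

/-- Irreducibility: the roots admit no partition into two nonempty mutually orthogonal parts. -/
def RootSystemData.Irreducible (R : RootSystemData V) : Prop :=
  ∀ A B : Set V, A ∪ B = ↑R.roots → Disjoint A B →
    (∀ a ∈ A, ∀ b ∈ B, (inner ℝ a b : ℝ) = 0) → A = ∅ ∨ B = ∅

/-- The reflection in the hyperplane orthogonal to `δ`. -/
noncomputable def reflAt (δ : V) : Function.End V :=
  fun x => x - (2 * (inner ℝ x δ : ℝ) / (inner ℝ δ δ : ℝ)) • δ

/-- The Weyl group, generated by the reflections in the roots (each reflection is an
involution, so the closure as a monoid of endomorphisms coincides with the generated group). -/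
def weylGroup (R : RootSystemData V) : Submonoid (Function.End V) :=
  Submonoid.closure {f | ∃ δ ∈ R.roots, f = reflAt δ}

/-- The inversion set `N(w) = {γ ∈ Δ⁺ : w(γ) < 0}`. -/
def invSet (R : RootSystemData V) (w : Function.End V) : Set V :=
  {γ | γ ∈ R.pos ∧ -(w γ) ∈ R.pos}

/-- The pairing `(γ, θ∨) = 2(γ,θ)/(θ,θ)`. -/
noncomputable def copair (θ γ : V) : ℝ := 2 * (inner ℝ γ θ : ℝ) / (inner ℝ θ θ : ℝ)

/-- `μ ≤ γ` iff `γ − μ` is a nonnegative integer combination of the simple roots lying in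
the subset `Z`. -/
def rootLEon (simples : Finset V) (Z : Set V) (μ γ : V) : Prop :=
  ∃ c : V → ℕ, (∀ α, α ∉ Z → c α = 0) ∧ γ = μ + ∑ α ∈ simples, (c α : ℝ) • α

/-- A subset `S ⊆ Δ⁺` is closed if `γ₁, γ₂ ∈ S` and `γ₁ + γ₂ ∈ Δ` imply `γ₁ + γ₂ ∈ S`. -/
def IsClosedSub (R : RootSystemData V) (S : Set V) : Prop :=
  ∀ γ₁ ∈ S, ∀ γ₂ ∈ S, γ₁ + γ₂ ∈ R.roots → γ₁ + γ₂ ∈ S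


/-! ### Auxiliary lemmas -/

section Aux

variable (R : RootSystemData V)

lemma coeff_eq (f g : V → ℝ)
    (h : ∑ α ∈ R.simples, f α • α = ∑ α ∈ R.simples, g α • α) :
    ∀ α ∈ R.simples, f α = g α := by
  classical
  intro α hα
  have h0 : ∑ i : {x // x ∈ R.simples}, (f (i : V) - g (i : V)) • (i : V) = 0 := by
    rw [Finset.sum_coe_sort R.simples (fun a => (f a - g a) • a)]
    simp only [sub_smul, Finset.sum_sub_distrib, h, sub_self]
  have := Fintype.linearIndependent_iff.mp R.simples_indep
    (fun i => f (i : V) - g (i : V)) h0 ⟨α, hα⟩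
  exact sub_eq_zero.mp this

lemma pos_ne_zero {γ : V} (hγ : γ ∈ R.pos) : γ ≠ 0 :=
  fun h => R.zero_not_mem (h ▸ R.pos_subset hγ)

lemma inner_self_pos' {x : V} (hx : x ≠ 0) : 0 < (inner ℝ x x : ℝ) :=
  lt_of_le_of_ne real_inner_self_nonneg fun h => hx (inner_self_eq_zero.mp h.symm)

lemma sum_pos_mem {γ₁ γ₂ : V} (h₁ : γ₁ ∈ R.pos) (h₂ : γ₂ ∈ R.pos)
    (hr : γ₁ + γ₂ ∈ R.roots) : γ₁ + γ₂ ∈ R.pos := by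
  rcases R.pos_or_neg _ hr with h | h
  · exact h
  · exfalso
    obtain ⟨c₁, hc₁⟩ := R.pos_combo γ₁ h₁
    obtain ⟨c₂, hc₂⟩ := R.pos_combo γ₂ h₂
    obtain ⟨c₃, hc₃⟩ := R.pos_combo _ h
    have key : ∑ α ∈ R.simples, ((c₁ α + c₂ α + c₃ α : ℕ) : ℝ) • α
        = ∑ α ∈ R.simples, (0 : ℝ) • α := by
      push_cast
      simp only [add_smul, Finset.sum_add_distrib, ← hc₁, ← hc₂, ← hc₃, zero_smul,
        Finset.sum_const_zero]
      abel
    have hco := coeff_eq R _ _ key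
    apply pos_ne_zero R h₁
    rw [hc₁]
    apply Finset.sum_eq_zero
    intro α hα
    have h0 := hco α hα
    have hz : c₁ α + c₂ α + c₃ α = 0 := by exact_mod_cast h0
    have : c₁ α = 0 := by omega
    simp [this]

open Classical in
/-- The height of a positive root. -/
noncomputable def ht (γ : V) : ℕ :=
  if h : γ ∈ R.pos then ∑ α ∈ R.simples, (R.pos_combo γ h).choose α else 0

lemma ht_spec {γ : V} (hγ : γ ∈ R.pos) (c : V → ℕ)
    (hc : γ = ∑ α ∈ R.simples, (c α : ℝ) • α) :
    ht R γ = ∑ α ∈ R.simples, c α := by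
  rw [ht, dif_pos hγ]
  apply Finset.sum_congr rfl
  intro α hα
  have h := coeff_eq R (fun β => ((R.pos_combo γ hγ).choose β : ℝ)) (fun β => (c β : ℝ))
    (by rw [← (R.pos_combo γ hγ).choose_spec, ← hc]) α hα
  have h' : (((R.pos_combo γ hγ).choose α : ℝ)) = ((c α : ℝ)) := h
  exact_mod_cast h'

lemma ht_add {γ₁ γ₂ : V} (h₁ : γ₁ ∈ R.pos) (h₂ : γ₂ ∈ R.pos) (h₃ : γ₁ + γ₂ ∈ R.pos) :
    ht R (γ₁ + γ₂) = ht R γ₁ + ht R γ₂ := by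
  obtain ⟨c₁, hc₁⟩ := R.pos_combo γ₁ h₁
  obtain ⟨c₂, hc₂⟩ := R.pos_combo γ₂ h₂
  have hc : γ₁ + γ₂ = ∑ α ∈ R.simples, ((c₁ α + c₂ α : ℕ) : ℝ) • α := by
    push_cast
    simp only [add_smul, Finset.sum_add_distrib, ← hc₁, ← hc₂]
  rw [ht_spec R h₃ _ hc, ht_spec R h₁ _ hc₁, ht_spec R h₂ _ hc₂, Finset.sum_add_distrib]

lemma ht_pos {γ : V} (hγ : γ ∈ R.pos) : 1 ≤ ht R γ := by
  by_contra h
  push_neg at h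
  interval_cases h' : ht R γ
  rw [ht, dif_pos hγ, Finset.sum_eq_zero_iff] at h'
  apply pos_ne_zero R hγ
  rw [(R.pos_combo γ hγ).choose_spec]
  apply Finset.sum_eq_zero
  intro α hα
  simp [h' α hα]

lemma ht_simple {α : V} (hα : α ∈ R.simples) : ht R α = 1 := by
  classical
  have hc : α = ∑ β ∈ R.simples, (((if β = α then 1 else 0 : ℕ)) : ℝ) • β := by
    push_cast
    simp only [ite_smul, one_smul, zero_smul]
    rw [Finset.sum_ite_eq' R.simples α (fun β => β), if_pos hα]
  rw [ht_spec R (R.simples_subset hα) _ hc]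
  simp [Finset.sum_ite_eq', hα]

lemma reflAt_apply (δ x : V) :
    reflAt δ x = x - (2 * (inner ℝ x δ : ℝ) / (inner ℝ δ δ : ℝ)) • δ := rfl

lemma reflAt_add (δ x y : V) : reflAt δ (x + y) = reflAt δ x + reflAt δ y := by
  simp only [reflAt_apply, inner_add_left]
  have h : (2 * ((inner ℝ x δ : ℝ) + (inner ℝ y δ : ℝ))) / (inner ℝ δ δ : ℝ)
      = 2 * (inner ℝ x δ : ℝ) / (inner ℝ δ δ : ℝ) + 2 * (inner ℝ y δ : ℝ) / (inner ℝ δ δ : ℝ) := by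
    ring
  rw [h, add_smul]
  abel

lemma reflAt_smul (δ : V) (c : ℝ) (x : V) : reflAt δ (c • x) = c • reflAt δ x := by
  simp only [reflAt_apply, real_inner_smul_left]
  have h : ∀ a d : ℝ, 2 * (c * a) / d = c * (2 * a / d) := fun a d => by ring
  rw [smul_sub, smul_smul, h]

lemma reflAt_linear (δ : V) : IsLinearMap ℝ (reflAt δ) :=
  ⟨reflAt_add δ, fun c x => reflAt_smul δ c x⟩

lemma reflAt_self {δ : V} (hδ : δ ≠ 0) : reflAt δ δ = -δ := by
  have h : (inner ℝ δ δ : ℝ) ≠ 0 := fun h0 => hδ (inner_self_eq_zero.mp h0)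
  rw [reflAt_apply]
  have h2 : 2 * (inner ℝ δ δ : ℝ) / (inner ℝ δ δ : ℝ) = 2 := by field_simp
  rw [h2, two_smul]
  abel

lemma reflAt_invol {δ : V} (hδ : δ ≠ 0) (x : V) : reflAt δ (reflAt δ x) = x := by
  have h : (inner ℝ δ δ : ℝ) ≠ 0 := fun h0 => hδ (inner_self_eq_zero.mp h0)
  simp only [reflAt_apply, inner_sub_left, real_inner_smul_left]
  have key : 2 * ((inner ℝ x δ : ℝ) - 2 * (inner ℝ x δ : ℝ) / (inner ℝ δ δ : ℝ) * (inner ℝ δ δ : ℝ))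
      / (inner ℝ δ δ : ℝ) = -(2 * (inner ℝ x δ : ℝ) / (inner ℝ δ δ : ℝ)) := by
    field_simp
    ring
  rw [key, neg_smul]
  abel

lemma reflAt_root_mem {γ δ : V} (hγ : γ ∈ R.roots) (hδ : δ ∈ R.roots) :
    reflAt δ γ ∈ R.roots :=
  R.reflect_mem γ hγ δ hδ

lemma weyl_linear {w : Function.End V} (hw : w ∈ weylGroup R) : IsLinearMap ℝ w := by
  induction hw using Submonoid.closure_induction with
  | mem f hf =>
    obtain ⟨δ, _, rfl⟩ := hf
    exact reflAt_linear δ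
  | one => exact ⟨fun _ _ => rfl, fun _ _ => rfl⟩
  | mul f g _ _ hf hg =>
    exact ⟨fun x y => by
        show f (g (x + y)) = f (g x) + f (g y)
        rw [hg.map_add, hf.map_add],
      fun c x => by
        show f (g (c • x)) = c • f (g x)
        rw [hg.map_smul, hf.map_smul]⟩

lemma weyl_root {w : Function.End V} (hw : w ∈ weylGroup R) :
    ∀ γ ∈ R.roots, w γ ∈ R.roots := by
  induction hw using Submonoid.closure_induction with
  | mem f hf =>
    obtain ⟨δ, hδ, rfl⟩ := hf
    exact fun γ hγ => reflAt_root_mem R hγ hδ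
  | one => exact fun γ hγ => hγ
  | mul f g _ _ hf hg => exact fun γ hγ => hf _ (hg γ hγ)

lemma root_sub_mem {γ α : V} (hγ : γ ∈ R.roots) (hα : α ∈ R.roots)
    (hin : 0 < (inner ℝ γ α : ℝ)) (hne : γ ≠ α) : γ - α ∈ R.roots := by
  have hγ0 : γ ≠ 0 := fun h => R.zero_not_mem (h ▸ hγ)
  have hα0 : α ≠ 0 := fun h => R.zero_not_mem (h ▸ hα)
  have hαα : 0 < (inner ℝ α α : ℝ) := inner_self_pos' hα0
  have hγγ : 0 < (inner ℝ γ γ : ℝ) := inner_self_pos' hγ0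
  have hαn : 0 < ‖α‖ := norm_pos_iff.mpr hα0
  have hγn : 0 < ‖γ‖ := norm_pos_iff.mpr hγ0
  have hCS : (inner ℝ γ α : ℝ) < ‖γ‖ * ‖α‖ := by
    apply inner_lt_norm_mul_iff_real.mpr
    intro hpar
    have hγeq : γ = (‖γ‖ / ‖α‖) • α := by
      have := congrArg (fun v => (‖α‖)⁻¹ • v) hpar
      simpa [smul_smul, inv_mul_cancel₀ (ne_of_gt hαn), div_eq_mul_inv, mul_comm] using this
    rcases R.reduced α hα (‖γ‖ / ‖α‖) (hγeq ▸ hγ) with h1 | h1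
    · exact hne (by rw [hγeq, h1, one_smul])
    · have : (0:ℝ) < ‖γ‖ / ‖α‖ := div_pos hγn hαn
      rw [h1] at this; linarith
  have hsq : (inner ℝ γ α : ℝ) ^ 2 < (inner ℝ γ γ : ℝ) * (inner ℝ α α : ℝ) := by
    have e1 := real_inner_self_eq_norm_mul_norm γ
    have e2 := real_inner_self_eq_norm_mul_norm α
    nlinarith
  obtain ⟨p, hp⟩ := R.crystallographic γ hγ α hα
  obtain ⟨q, hq⟩ := R.crystallographic α hα γ hγ
  have hp0 : 0 < (p : ℝ) := by
    rw [← hp]; positivity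
  have hq0 : 0 < (q : ℝ) := by
    rw [← hq, real_inner_comm γ α]; positivity
  have hpq : (p : ℝ) * q < 4 := by
    rw [← hp, ← hq, real_inner_comm γ α, div_mul_div_comm]
    rw [div_lt_iff₀ (by positivity)]
    nlinarith
  have hp1 : 0 < p := by exact_mod_cast hp0
  have hq1 : 0 < q := by exact_mod_cast hq0
  have hpqZ : p * q < 4 := by exact_mod_cast hpq
  have hcase : p = 1 ∨ q = 1 := by
    by_contra hc
    push_neg at hc
    have h2p : 2 ≤ p := by omega
    have h2q : 2 ≤ q := by omega
    nlinarith
  rcases hcase with h1 | h1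
  · have := R.reflect_mem γ hγ α hα
    rw [hp, h1] at this
    simpa using this
  · have h2 := R.reflect_mem α hα γ hγ
    rw [hq, h1] at h2
    have := R.neg_mem _ h2
    simpa [neg_sub] using this

lemma exists_simple_inner_pos {γ : V} (hγ : γ ∈ R.pos) :
    ∃ α ∈ R.simples, 0 < (inner ℝ γ α : ℝ) := by
  by_contra h
  push_neg at h
  have hγγ : 0 < (inner ℝ γ γ : ℝ) := inner_self_pos' (pos_ne_zero R hγ)
  obtain ⟨c, hc⟩ := R.pos_combo γ hγ
  have hexp : (inner ℝ γ γ : ℝ) = ∑ α ∈ R.simples, (c α : ℝ) * (inner ℝ γ α : ℝ) := by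
    calc (inner ℝ γ γ : ℝ) = (inner ℝ γ (∑ α ∈ R.simples, (c α : ℝ) • α) : ℝ) := by rw [← hc]
    _ = ∑ α ∈ R.simples, (c α : ℝ) * (inner ℝ γ α : ℝ) := by
        rw [inner_sum]
        exact Finset.sum_congr rfl fun α _ => real_inner_smul_right γ α (c α)
  have hle : (inner ℝ γ γ : ℝ) ≤ 0 := by
    rw [hexp]
    apply Finset.sum_nonpos
    intro α hα
    exact mul_nonpos_iff.mpr (Or.inl ⟨by positivity, h α hα⟩)
  linarith

lemma decomp {γ : V} (hγ : γ ∈ R.pos) (hns : γ ∉ R.simples) :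
    ∃ α ∈ R.simples, γ - α ∈ R.pos := by
  obtain ⟨α, hα, hin⟩ := exists_simple_inner_pos R hγ
  have hαr : α ∈ R.roots := R.pos_subset (R.simples_subset hα)
  have hne : γ ≠ α := fun h => hns (h ▸ hα)
  have hsub : γ - α ∈ R.roots := root_sub_mem R (R.pos_subset hγ) hαr hin hne
  rcases R.pos_or_neg _ hsub with h | h
  · exact ⟨α, hα, h⟩
  · exfalso
    rw [neg_sub] at h
    have hsum : γ + (α - γ) = α := by abel
    have hα_pos : γ + (α - γ) ∈ R.pos := by rw [hsum]; exact R.simples_subset hα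
    have hht := ht_add R hγ h hα_pos
    rw [hsum, ht_simple R hα] at hht
    have h1 := ht_pos R hγ
    have h2 := ht_pos R h
    omega

lemma closed_has_simple {M : Set V} (hM : M ⊆ ↑R.pos) (hne : M.Nonempty)
    (hcc : IsClosedSub R (↑R.pos \ M)) : ∃ α ∈ R.simples, α ∈ M := by
  classical
  have hS : {n : ℕ | ∃ γ ∈ M, ht R γ = n}.Nonempty :=
    ⟨ht R hne.choose, hne.choose, hne.choose_spec, rfl⟩
  obtain ⟨γ, hγM, hγn⟩ := Nat.sInf_mem hS
  by_cases hs : γ ∈ R.simples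
  · exact ⟨γ, hs, hγM⟩
  exfalso
  have hγp : γ ∈ R.pos := hM hγM
  obtain ⟨α, hα, hsub⟩ := decomp R hγp hs
  have hαp : α ∈ R.pos := R.simples_subset hα
  have heq : α + (γ - α) = γ := by abel
  have hγp' : α + (γ - α) ∈ R.pos := by rw [heq]; exact hγp
  have hht := ht_add R hαp hsub hγp'
  rw [heq, ht_simple R hα] at hht
  have h2 := ht_pos R hsub
  have hmin : ∀ δ ∈ M, ht R γ ≤ ht R δ := fun δ hδ => hγn ▸ Nat.sInf_le ⟨δ, hδ, rfl⟩
  have hαM : α ∉ M := fun hmem => by have := hmin α hmem; rw [ht_simple R hα] at this; omega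
  have hsM : γ - α ∉ M := fun hmem => by have := hmin _ hmem; omega
  have hmem : α + (γ - α) ∈ ↑R.pos \ M :=
    hcc α ⟨Finset.mem_coe.mpr hαp, hαM⟩ (γ - α) ⟨Finset.mem_coe.mpr hsub, hsM⟩
      (by rw [heq]; exact R.pos_subset hγp)
  rw [heq] at hmem
  exact hmem.2 hγM

lemma reflAt_simple_pos {α γ : V} (hα : α ∈ R.simples) (hγ : γ ∈ R.pos) (hne : γ ≠ α) :
    reflAt α γ ∈ R.pos := by
  classical
  have hαp : α ∈ R.pos := R.simples_subset hα
  have hαr : α ∈ R.roots := R.pos_subset hαp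
  have hγr : γ ∈ R.roots := R.pos_subset hγ
  have hroots : reflAt α γ ∈ R.roots := reflAt_root_mem R hγr hαr
  rcases R.pos_or_neg _ hroots with h | h
  · exact h
  exfalso
  obtain ⟨c, hc⟩ := R.pos_combo γ hγ
  have hβ : ∃ β ∈ R.simples, β ≠ α ∧ c β ≠ 0 := by
    by_contra hb
    push_neg at hb
    have hγα : γ = (c α : ℝ) • α := by
      rw [hc]
      rw [Finset.sum_eq_single_of_mem α hα]
      intro β hβs hβne
      rw [hb β hβs hβne]
      simp
    rcases R.reduced α hαr (c α) (hγα ▸ hγr) with h1 | h1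
    · exact hne (by rw [hγα, h1, one_smul])
    · have : (0:ℝ) ≤ (c α : ℝ) := Nat.cast_nonneg _
      rw [h1] at this; linarith
  obtain ⟨β₀, hβ₀s, hβ₀ne, hβ₀c⟩ := hβ
  obtain ⟨d, hd⟩ := R.pos_combo _ h
  set k := 2 * (inner ℝ γ α : ℝ) / (inner ℝ α α : ℝ) with hk
  have hkey : ∑ β ∈ R.simples, ((c β : ℝ) + (d β : ℝ)) • β
      = ∑ β ∈ R.simples, (if β = α then k else 0) • β := by
    have h2 : ∑ β ∈ R.simples, ((c β : ℝ) + (d β : ℝ)) • β = k • α := by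
      simp only [add_smul, Finset.sum_add_distrib, ← hc, ← hd]
      have : reflAt α γ = γ - k • α := rfl
      rw [this]
      abel
    rw [h2]
    simp only [ite_smul, zero_smul]
    rw [Finset.sum_ite_eq' R.simples α (fun β => k • β), if_pos hα]
  have hco := coeff_eq R _ _ hkey β₀ hβ₀s
  rw [if_neg hβ₀ne] at hco
  have hc0 : (c β₀ : ℝ) = 0 := by
    have h1 : (0:ℝ) ≤ (c β₀ : ℝ) := Nat.cast_nonneg _
    have h2 : (0:ℝ) ≤ (d β₀ : ℝ) := Nat.cast_nonneg _
    linarith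
  exact hβ₀c (by exact_mod_cast hc0)

lemma invSet_one : invSet R 1 = ∅ := by
  ext γ
  simp only [invSet, Set.mem_setOf_eq, Set.mem_empty_iff_false, iff_false, not_and]
  intro h
  exact R.pos_neg_disjoint γ h

lemma reflAt_mem_weyl {δ : V} (hδ : δ ∈ R.roots) : reflAt δ ∈ weylGroup R :=
  Submonoid.subset_closure ⟨δ, hδ, rfl⟩

lemma reverse_aux : ∀ n (M : Set V), M ⊆ ↑R.pos → M.ncard = n → IsClosedSub R M →
    IsClosedSub R (↑R.pos \ M) → ∃ w ∈ weylGroup R, M = invSet R w := by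
  intro n
  induction n using Nat.strong_induction_on with
  | _ n ih =>
  intro M hM hcard hMc hMcc
  rcases Set.eq_empty_or_nonempty M with rfl | hne
  · exact ⟨1, one_mem _, (invSet_one R).symm⟩
  obtain ⟨α, hαs, hαM⟩ := closed_has_simple R hM hne hMcc
  have hαp : α ∈ R.pos := R.simples_subset hαs
  have hαr : α ∈ R.roots := R.pos_subset hαp
  have hα0 : α ≠ 0 := pos_ne_zero R hαp
  have hinv : ∀ x, reflAt α (reflAt α x) = x := reflAt_invol hα0
  have hinj : Function.Injective (reflAt α) := Function.LeftInverse.injective hinv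
  set M' := reflAt α '' (M \ {α}) with hM'def
  have hfin : M.Finite := Set.Finite.subset R.pos.finite_toSet hM
  have hM'sub : M' ⊆ ↑R.pos := by
    rintro _ ⟨γ, ⟨hγ, hγne⟩, rfl⟩
    exact Finset.mem_coe.mpr
      (reflAt_simple_pos R hαs (Finset.mem_coe.mp (hM hγ)) (Set.mem_singleton_iff.not.mp hγne))
  have hposM : ∀ γ ∈ M, γ ∈ R.pos := fun γ hγ => Finset.mem_coe.mp (hM hγ)
  have hrefl_pos : ∀ γ ∈ M, γ ≠ α → reflAt α γ ∈ R.pos := fun γ hγ hne' =>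
    reflAt_simple_pos R hαs (hposM γ hγ) hne'
  have hcard' : M'.ncard < n := by
    rw [hM'def, Set.ncard_image_of_injective _ hinj, ← hcard]
    exact Set.ncard_diff_singleton_lt_of_mem hαM hfin
  have hM'c : IsClosedSub R M' := by
    rintro _ ⟨γ₁, ⟨hγ₁, hγ₁ne⟩, rfl⟩ _ ⟨γ₂, ⟨hγ₂, hγ₂ne⟩, rfl⟩ hsum
    rw [← reflAt_add] at hsum
    have hγ₁ne' : γ₁ ≠ α := Set.mem_singleton_iff.not.mp hγ₁ne
    have hγ₂ne' : γ₂ ≠ α := Set.mem_singleton_iff.not.mp hγ₂ne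
    have hγγr : γ₁ + γ₂ ∈ R.roots := by
      have h1 := reflAt_root_mem R hsum hαr
      rwa [hinv] at h1
    have hmem : γ₁ + γ₂ ∈ M := hMc γ₁ hγ₁ γ₂ hγ₂ hγγr
    have hne3 : γ₁ + γ₂ ≠ α := by
      intro h
      have hp : reflAt α γ₁ + reflAt α γ₂ ∈ R.pos :=
        sum_pos_mem R (hrefl_pos γ₁ hγ₁ hγ₁ne') (hrefl_pos γ₂ hγ₂ hγ₂ne')
          (by rwa [← reflAt_add])
      rw [← reflAt_add, h, reflAt_self hα0] at hp
      exact R.pos_neg_disjoint α hαp hp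
    exact ⟨γ₁ + γ₂, ⟨hmem, hne3⟩, reflAt_add α γ₁ γ₂⟩
  have hrefl_not_M : ∀ δ, δ ∈ R.pos → δ ∉ M' → δ ≠ α → reflAt α δ ∉ M := by
    intro δ hδp hδM' hδne hmem
    apply hδM'
    refine ⟨reflAt α δ, ⟨hmem, ?_⟩, hinv δ⟩
    intro h
    rw [Set.mem_singleton_iff] at h
    have : δ = reflAt α α := by rw [← hinv δ, h]
    rw [reflAt_self hα0] at this
    exact R.pos_neg_disjoint δ hδp (by rw [this]; simpa using hαp)
  have hM'cc : IsClosedSub R (↑R.pos \ M') := by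
    rintro δ₁ ⟨hδ₁p, hδ₁M⟩ δ₂ ⟨hδ₂p, hδ₂M⟩ hsum
    have hδ₁p' : δ₁ ∈ R.pos := Finset.mem_coe.mp hδ₁p
    have hδ₂p' : δ₂ ∈ R.pos := Finset.mem_coe.mp hδ₂p
    refine ⟨Finset.mem_coe.mpr (sum_pos_mem R hδ₁p' hδ₂p' hsum), ?_⟩
    rintro ⟨γ, ⟨hγM, hγne⟩, hγeq⟩
    have hγne' : γ ≠ α := Set.mem_singleton_iff.not.mp hγne
    have hγr : γ ∈ R.roots := R.pos_subset (hposM γ hγM)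
    have hγ : γ = reflAt α δ₁ + reflAt α δ₂ := by
      rw [← hinv γ, hγeq, reflAt_add]
    by_cases h1 : δ₁ = α
    · by_cases h2 : δ₂ = α
      · rw [h1, h2, reflAt_self hα0] at hγ
        have hγ2 : γ = (-2 : ℝ) • α := by rw [hγ]; module
        rcases R.reduced α hαr (-2) (hγ2 ▸ hγr) with hr | hr <;> norm_num at hr
      · have hδ₂pos := reflAt_simple_pos R hαs hδ₂p' h2
        have hδ₂nM : reflAt α δ₂ ∉ M := hrefl_not_M δ₂ hδ₂p' hδ₂M h2
        have hγα : γ + α = reflAt α δ₂ := by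
          rw [hγ, h1, reflAt_self hα0]; abel
        have : γ + α ∈ M := hMc γ hγM α hαM
          (by rw [hγα]; exact R.pos_subset hδ₂pos)
        rw [hγα] at this
        exact hδ₂nM this
    · by_cases h2 : δ₂ = α
      · have hδ₁pos := reflAt_simple_pos R hαs hδ₁p' h1
        have hδ₁nM : reflAt α δ₁ ∉ M := hrefl_not_M δ₁ hδ₁p' hδ₁M h1
        have hγα : γ + α = reflAt α δ₁ := by
          rw [hγ, h2, reflAt_self hα0]; abel
        have : γ + α ∈ M := hMc γ hγM α hαM
          (by rw [hγα]; exact R.pos_subset hδ₁pos)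
        rw [hγα] at this
        exact hδ₁nM this
      · have hδ₁pos := reflAt_simple_pos R hαs hδ₁p' h1
        have hδ₂pos := reflAt_simple_pos R hαs hδ₂p' h2
        have hδ₁nM : reflAt α δ₁ ∉ M := hrefl_not_M δ₁ hδ₁p' hδ₁M h1
        have hδ₂nM : reflAt α δ₂ ∉ M := hrefl_not_M δ₂ hδ₂p' hδ₂M h2
        have hγ2 : γ ∈ ↑R.pos \ M := by
          rw [hγ]
          exact hMcc _ ⟨Finset.mem_coe.mpr hδ₁pos, hδ₁nM⟩ _
            ⟨Finset.mem_coe.mpr hδ₂pos, hδ₂nM⟩ (by rw [← hγ]; exact hγr)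
        exact hγ2.2 hγM
  obtain ⟨w', hw', hw'eq⟩ := ih _ hcard' M' hM'sub rfl hM'c hM'cc
  refine ⟨w' * reflAt α, mul_mem hw' (reflAt_mem_weyl R hαr), ?_⟩
  have happ : ∀ x, (w' * reflAt α) x = w' (reflAt α x) := fun x => rfl
  have hα_not_M' : α ∉ M' := by
    rintro ⟨γ, ⟨hγM, hγne⟩, hγeq⟩
    have hγ : γ = reflAt α α := by rw [← hinv γ, hγeq]
    rw [reflAt_self hα0] at hγ
    exact R.pos_neg_disjoint γ (hposM γ hγM) (by rw [hγ]; simpa using hαp)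
  have hw'lin := weyl_linear R hw'
  have hw'root := weyl_root R hw'
  have hw'αpos : w' α ∈ R.pos := by
    rcases R.pos_or_neg _ (hw'root α hαr) with h | h
    · exact h
    · exact absurd (hw'eq ▸ (⟨hαp, h⟩ : α ∈ invSet R w')) hα_not_M'
  ext γ
  constructor
  · intro hγM
    have hγp : γ ∈ R.pos := hposM γ hγM
    by_cases hga : γ = α
    · subst hga
      refine ⟨hγp, ?_⟩
      rw [happ, reflAt_self hα0, hw'lin.map_neg, neg_neg]
      exact hw'αpos
    · have hmem : reflAt α γ ∈ M' := ⟨γ, ⟨hγM, hga⟩, rfl⟩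
      rw [hw'eq] at hmem
      exact ⟨hγp, hmem.2⟩
  · rintro ⟨hγp, hγneg⟩
    by_cases hga : γ = α
    · subst hga; exact hαM
    · have h1 : reflAt α γ ∈ invSet R w' :=
        ⟨reflAt_simple_pos R hαs hγp hga, hγneg⟩
      rw [← hw'eq] at h1
      obtain ⟨γ', ⟨hγ'M, _⟩, heq⟩ := h1
      exact hinj heq ▸ hγ'M

end Aux

/-- For an irreducible reduced crystallographic root system, a subset `M ⊆ Δ⁺` is the
inversion set `N(w)` of some Weyl group element `w` iff both `M` and `Δ⁺ \ M` are closed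
under addition of roots. -/
theorem inversion_set_iff_closed (R : RootSystemData V) (hirr : R.Irreducible)
    (M : Set V) (hM : M ⊆ ↑R.pos) :
    (∃ w ∈ weylGroup R, M = invSet R w) ↔
      IsClosedSub R M ∧ IsClosedSub R (↑R.pos \ M) := by
  constructor
  · rintro ⟨w, hw, rfl⟩
    have hlin := weyl_linear R hw
    have hroot := weyl_root R hw
    constructor
    · rintro γ₁ ⟨h1p, h1n⟩ γ₂ ⟨h2p, h2n⟩ hsum
      refine ⟨sum_pos_mem R h1p h2p hsum, ?_⟩
      have hadd : w (γ₁ + γ₂) = w γ₁ + w γ₂ := hlin.map_add γ₁ γ₂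
      have hr : -(w γ₁) + -(w γ₂) ∈ R.roots := by
        have := R.neg_mem _ (hroot _ hsum)
        rwa [hadd, neg_add] at this
      have := sum_pos_mem R h1n h2n hr
      rwa [hadd, neg_add]
    · rintro γ₁ ⟨h1p, h1n⟩ γ₂ ⟨h2p, h2n⟩ hsum
      have h1p' : γ₁ ∈ R.pos := Finset.mem_coe.mp h1p
      have h2p' : γ₂ ∈ R.pos := Finset.mem_coe.mp h2p
      have hposs := sum_pos_mem R h1p' h2p' hsum
      refine ⟨Finset.mem_coe.mpr hposs, ?_⟩
      rintro ⟨_, hneg⟩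
      have hw1 : w γ₁ ∈ R.pos := by
        rcases R.pos_or_neg _ (hroot _ (R.pos_subset h1p')) with h | h
        · exact h
        · exact absurd (⟨h1p', h⟩ : γ₁ ∈ invSet R w) h1n
      have hw2 : w γ₂ ∈ R.pos := by
        rcases R.pos_or_neg _ (hroot _ (R.pos_subset h2p')) with h | h
        · exact h
        · exact absurd (⟨h2p', h⟩ : γ₂ ∈ invSet R w) h2n
      have hr : w γ₁ + w γ₂ ∈ R.roots := by
        have := hroot _ hsum
        rwa [hlin.map_add] at this
      have hposw := sum_pos_mem R hw1 hw2 hr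
      have hnn : -(w (γ₁ + γ₂)) ∉ R.pos := by
        rw [hlin.map_add]
        exact R.pos_neg_disjoint _ hposw
      exact hnn hneg
  · rintro ⟨hMc, hMcc⟩
    exact reverse_aux R M.ncard M hM rfl hMc hMcc
end

section
/- In the setting of an abelian ℤ-grading of a simple Lie algebra, for w ∈ W⁰ with upper ideal I_w = Δ(1) \ N(w), a root γ ∈ I_w is a minimal element of I_w if and only if w(γ) is a simple root; equivalently, min(I_w) = w⁻¹(Π) ∩ Δ(1). -/
variable {V : Type*} [NormedAddCommGroup V] [InnerProductSpace ℝ V]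

/-- The weights of `g(1)`: roots with `γ(h̃) = 1` for the defining functional `ℓ`. -/
def gradeOne (R : RootSystemData V) (ℓ : V →ₗ[ℝ] ℝ) : Set V :=
  {γ | γ ∈ R.roots ∧ ℓ γ = 1}

/-- The minimal-length coset representatives
`W⁰ = {w ∈ W : w(α) ∈ Δ⁺ for all α ∈ Δ(0)⁺}`. -/
def minLengthReps (R : RootSystemData V) (ℓ : V →ₗ[ℝ] ℝ) : Set (Function.End V) :=
  {w | w ∈ weylGroup R ∧ ∀ α, α ∈ R.pos → ℓ α = 0 → w α ∈ R.pos}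

/-- The upper ideal `I_w = Δ(1) \ N(w)` attached to `w ∈ W⁰`. -/
def idealOf (R : RootSystemData V) (ℓ : V →ₗ[ℝ] ℝ) (w : Function.End V) : Set V :=
  gradeOne R ℓ \ invSet R w

/-- The minimal elements of `S` with respect to the relation `r`. -/
def minimalsRel (r : V → V → Prop) (S : Set V) : Set V :=
  {x | x ∈ S ∧ ∀ y ∈ S, r y x → y = x}

/-- The maximal elements of `S` with respect to the relation `r`. -/
def maximalsRel (r : V → V → Prop) (S : Set V) : Set V :=
  {x | x ∈ S ∧ ∀ y ∈ S, r x y → y = x}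

section AbelianMinAux

variable (R : RootSystemData V)

lemma RS.root_ne_zero {γ : V} (h : γ ∈ R.roots) : γ ≠ 0 :=
  fun h0 => R.zero_not_mem (h0 ▸ h)

lemma RS.inner_self_pos {γ : V} (h : γ ∈ R.roots) : (0:ℝ) < inner ℝ γ γ :=
  lt_of_le_of_ne real_inner_self_nonneg
    (fun h' => RS.root_ne_zero R h (inner_self_eq_zero.1 h'.symm))

/-- The conjunction of properties preserved by elements of the Weyl group. -/
def GoodEnd (u : Function.End V) : Prop :=
  (∀ x y : V, u (x + y) = u x + u y) ∧ (∀ (c : ℝ) (x : V), u (c • x) = c • u x) ∧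
  (∀ x y : V, (inner ℝ (u x) (u y) : ℝ) = inner ℝ x y) ∧ (∀ γ ∈ R.roots, u γ ∈ R.roots)

lemma goodEnd_one : GoodEnd R 1 :=
  ⟨fun _ _ => rfl, fun _ _ => rfl, fun _ _ => rfl, fun _ h => h⟩

lemma goodEnd_mul {u v : Function.End V} (hu : GoodEnd R u) (hv : GoodEnd R v) :
    GoodEnd R (u * v) :=
  ⟨fun x y => by show u (v (x+y)) = _; rw [hv.1, hu.1]; rfl,
   fun c x => by show u (v (c • x)) = _; rw [hv.2.1, hu.2.1]; rfl,
   fun x y => by show (inner ℝ (u (v x)) (u (v y)) : ℝ) = _; rw [hu.2.2.1, hv.2.2.1],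
   fun γ hγ => hu.2.2.2 _ (hv.2.2.2 γ hγ)⟩

lemma goodEnd_reflAt {δ : V} (hδ : δ ∈ R.roots) : GoodEnd R (reflAt δ) := by
  have hd : (inner ℝ δ δ : ℝ) ≠ 0 := ne_of_gt (RS.inner_self_pos R hδ)
  refine ⟨fun x y => ?_, fun c x => ?_, fun x y => ?_, fun γ hγ => R.reflect_mem γ hγ δ hδ⟩
  · simp only [reflAt, inner_add_left]
    rw [mul_add, add_div, add_smul]; abel
  · simp only [reflAt, real_inner_smul_left, smul_sub, smul_smul]
    rw [show 2 * (c * (inner ℝ x δ : ℝ)) / (inner ℝ δ δ : ℝ)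
        = c * (2 * (inner ℝ x δ : ℝ) / (inner ℝ δ δ : ℝ)) by ring]
  · simp only [reflAt, inner_sub_left, inner_sub_right, real_inner_smul_left,
      real_inner_smul_right]
    rw [real_inner_comm δ y]
    field_simp
    ring

lemma reflAt_sq {δ : V} (hδ : δ ∈ R.roots) : reflAt δ * reflAt δ = 1 := by
  have hd : (inner ℝ δ δ : ℝ) ≠ 0 := ne_of_gt (RS.inner_self_pos R hδ)
  funext x
  show reflAt δ (reflAt δ x) = x
  simp only [reflAt, inner_sub_left, real_inner_smul_left]
  rw [show 2 * ((inner ℝ x δ : ℝ) - 2 * (inner ℝ x δ : ℝ) / (inner ℝ δ δ : ℝ) * (inner ℝ δ δ : ℝ))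
        / (inner ℝ δ δ : ℝ) = -(2 * (inner ℝ x δ : ℝ) / (inner ℝ δ δ : ℝ)) by field_simp; ring]
  simp [sub_eq_add_neg]

lemma weyl_good {w : Function.End V} (hw : w ∈ weylGroup R) :
    ∃ w' : Function.End V, w * w' = 1 ∧ w' * w = 1 ∧ GoodEnd R w ∧ GoodEnd R w' := by
  induction hw using Submonoid.closure_induction with
  | mem x hx =>
    obtain ⟨δ, hδ, rfl⟩ := hx
    exact ⟨reflAt δ, reflAt_sq R hδ, reflAt_sq R hδ, goodEnd_reflAt R hδ, goodEnd_reflAt R hδ⟩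
  | one => exact ⟨1, one_mul 1, one_mul 1, goodEnd_one R, goodEnd_one R⟩
  | mul x y hx hy ihx ihy =>
    obtain ⟨x', hxx', hx'x, gx, gx'⟩ := ihx
    obtain ⟨y', hyy', hy'y, gy, gy'⟩ := ihy
    refine ⟨y' * x', ?_, ?_, goodEnd_mul R gx gy, goodEnd_mul R gy' gx'⟩
    · rw [mul_assoc, ← mul_assoc y, hyy', one_mul, hxx']
    · rw [mul_assoc, ← mul_assoc x', hx'x, one_mul, hy'y]

lemma coords_unique (c d : V → ℝ)
    (h : ∑ α ∈ R.simples, c α • α = ∑ α ∈ R.simples, d α • α) :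
    ∀ α ∈ R.simples, c α = d α := by
  intro α hα
  have := linearIndependent_iff'.1 R.simples_indep Finset.univ (fun i => c i - d i) ?_
    ⟨α, hα⟩ (Finset.mem_univ _)
  · simpa [sub_eq_zero] using this
  · rw [Finset.univ_eq_attach, Finset.sum_attach R.simples (fun β => (c β - d β) • β)]
    simp only [sub_smul, Finset.sum_sub_distrib, h, sub_self]

lemma pos_coords {p : V} (hp : p ∈ R.pos) (t : V → ℝ)
    (ht : p = ∑ α ∈ R.simples, t α • α) :
    ∀ α ∈ R.simples, ∃ k : ℕ, t α = (k : ℝ) := by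
  obtain ⟨c, hc⟩ := R.pos_combo p hp
  intro α hα
  exact ⟨c α, (coords_unique R t (fun β => (c β : ℝ)) (by rw [← ht, ← hc]) α hα)⟩

lemma not_pos_of_neg_coord {p : V} (hp : p ∈ R.pos) (t : V → ℝ)
    (ht : p = ∑ α ∈ R.simples, t α • α) {α₀ : V} (hα₀ : α₀ ∈ R.simples)
    (hneg : t α₀ < 0) : False := by
  obtain ⟨k, hk⟩ := pos_coords R hp t ht α₀ hα₀
  rw [hk] at hneg
  exact absurd hneg (not_lt.2 (Nat.cast_nonneg k))

variable (ℓ : V →ₗ[ℝ] ℝ)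

lemma pos_of_grade_pos (hsimp : ∀ α ∈ R.simples, 0 ≤ ℓ α) {γ : V}
    (hγ : γ ∈ R.roots) (h : 0 < ℓ γ) : γ ∈ R.pos := by
  rcases R.pos_or_neg γ hγ with h' | h'
  · exact h'
  · exfalso
    obtain ⟨c, hc⟩ := R.pos_combo _ h'
    have h1 : ℓ (-γ) = ∑ α ∈ R.simples, (c α : ℝ) * ℓ α := by
      rw [hc, map_sum]; simp [smul_eq_mul]
    have h0 : 0 ≤ ℓ (-γ) := h1 ▸ Finset.sum_nonneg
      (fun α hα => mul_nonneg (Nat.cast_nonneg _) (hsimp α hα))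
    rw [map_neg] at h0; linarith

lemma grade0_supported (hsimp : ∀ α ∈ R.simples, 0 ≤ ℓ α) {σ : V}
    (hσ : σ ∈ R.pos) (h0 : ℓ σ = 0) :
    ∃ c : V → ℕ, (∀ α, ℓ α ≠ 0 → c α = 0) ∧ σ = ∑ α ∈ R.simples, (c α : ℝ) • α := by
  classical
  obtain ⟨c, hc⟩ := R.pos_combo σ hσ
  have hsum : ∑ α ∈ R.simples, (c α : ℝ) * ℓ α = 0 := by
    rw [← h0, hc, map_sum]; simp [smul_eq_mul]
  have hzero : ∀ α ∈ R.simples, (c α : ℝ) * ℓ α = 0 :=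
    (Finset.sum_eq_zero_iff_of_nonneg
      (fun α hα => mul_nonneg (Nat.cast_nonneg _) (hsimp α hα))).1 hsum
  refine ⟨fun α => if ℓ α = 0 ∧ α ∈ R.simples then c α else 0, fun α hα => by simp [hα], ?_⟩
  rw [hc]
  refine Finset.sum_congr rfl (fun α hα => ?_)
  by_cases hℓ : ℓ α = 0
  · simp [hℓ, hα]
  · have hcα : (c α : ℝ) = 0 := by
      rcases mul_eq_zero.1 (hzero α hα) with h | h
      · exact h
      · exact absurd h hℓ
    simp [hℓ, hcα, Nat.cast_eq_zero.1 hcα]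

lemma rootLEon_of_grade0 (hsimp : ∀ α ∈ R.simples, 0 ≤ ℓ α) {σ : V}
    (hσ : σ ∈ R.pos) (h0 : ℓ σ = 0) (k : ℕ) (μ : V) :
    rootLEon R.simples {α | ℓ α = 0} μ (μ + (k : ℝ) • σ) := by
  obtain ⟨c, hcsupp, hc⟩ := grade0_supported R ℓ hsimp hσ h0
  refine ⟨fun α => k * c α, fun α hα => by show k * c α = 0; rw [hcsupp α hα, mul_zero], ?_⟩
  rw [hc, Finset.smul_sum]
  congr 1
  refine Finset.sum_congr rfl (fun α _ => ?_)
  rw [smul_smul]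
  push_cast
  ring_nf

end AbelianMinAux

section AbelianKey

variable (R : RootSystemData V) (ℓ : V →ₗ[ℝ] ℝ)

lemma key_min (hsimp : ∀ α ∈ R.simples, 0 ≤ ℓ α)
    (w w' : Function.End V) (hw'w : w' * w = 1)
    (Gw : GoodEnd R w)
    (hw0 : ∀ α, α ∈ R.pos → ℓ α = 0 → w α ∈ R.pos)
    {γ : V} (hγ : γ ∈ idealOf R ℓ w) (hs : w γ ∈ R.simples) :
    γ ∈ minimalsRel (rootLEon R.simples {α | ℓ α = 0}) (idealOf R ℓ w) := by
  classical
  have hinj : ∀ x y : V, w x = w y → x = y := by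
    intro x y h
    have hx : w' (w x) = x := congrFun hw'w x
    have hy : w' (w y) = y := congrFun hw'w y
    rw [← hx, h, hy]
  refine ⟨hγ, ?_⟩
  intro y hy hle
  obtain ⟨c, hcsupp, hcsum⟩ := hle
  have hypos : y ∈ R.pos := pos_of_grade_pos R ℓ hsimp hy.1.1 (by rw [hy.1.2]; norm_num)
  have hwy_roots : w y ∈ R.roots := Gw.2.2.2 y hy.1.1
  have hwy_pos : w y ∈ R.pos := by
    rcases R.pos_or_neg _ hwy_roots with h | h
    · exact h
    · exact absurd ⟨hypos, h⟩ hy.2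
  obtain ⟨d, hd⟩ := R.pos_combo _ hwy_pos
  -- coordinates of w α for the relevant simple roots α
  have hEex : ∀ α : V, ∃ f : V → ℕ,
      (α ∈ R.simples → ℓ α = 0 → w α = ∑ β ∈ R.simples, (f β : ℝ) • β) := by
    intro α
    by_cases h : α ∈ R.simples ∧ ℓ α = 0
    · obtain ⟨f, hf⟩ := R.pos_combo _ (hw0 α (R.simples_subset h.1) h.2)
      exact ⟨f, fun _ _ => hf⟩
    · exact ⟨fun _ => 0, fun h1 h2 => absurd ⟨h1, h2⟩ h⟩
  choose E hE using hEex
  set S : V → ℕ := fun β => ∑ α ∈ R.simples, c α * E α β with hS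
  -- w γ = w y + ∑ S β • β
  have hterm : ∀ α ∈ R.simples, (c α : ℝ) • w α
      = ∑ β ∈ R.simples, ((c α * E α β : ℕ) : ℝ) • β := by
    intro α hα
    by_cases hc0 : c α = 0
    · simp [hc0]
    · have hℓ0 : ℓ α = 0 := by
        by_contra h
        exact hc0 (hcsupp α h)
      rw [hE α hα hℓ0, Finset.smul_sum]
      refine Finset.sum_congr rfl (fun β _ => ?_)
      rw [smul_smul]
      push_cast
      ring_nf
  have hkey : w γ = w y + ∑ β ∈ R.simples, (S β : ℝ) • β := by
    have h1 : w γ = w y + w (∑ α ∈ R.simples, (c α : ℝ) • α) := by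
      rw [hcsum, Gw.1]
    have h2 : w (∑ α ∈ R.simples, (c α : ℝ) • α)
        = ∑ α ∈ R.simples, (c α : ℝ) • w α := by
      have : ∀ (s : Finset V), w (∑ α ∈ s, (c α : ℝ) • α) = ∑ α ∈ s, (c α : ℝ) • w α := by
        intro s
        induction s using Finset.induction_on with
        | empty =>
          simp only [Finset.sum_empty]
          have : w ((0:ℝ) • 0) = (0:ℝ) • w 0 := Gw.2.1 0 0
          simpa using this
        | insert _ _ hnotmem ih =>
          rw [Finset.sum_insert hnotmem, Finset.sum_insert hnotmem, Gw.1, Gw.2.1, ih]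
      exact this _
    rw [h1, h2]
    congr 1
    rw [Finset.sum_congr rfl hterm, Finset.sum_comm]
    refine Finset.sum_congr rfl (fun β _ => ?_)
    rw [hS]
    push_cast
    rw [Finset.sum_smul]
  -- coordinates of w γ
  have hwγ : w γ = ∑ β ∈ R.simples, (if β = w γ then (1:ℝ) else 0) • β := by
    simp only [ite_smul, one_smul, zero_smul]
    rw [Finset.sum_ite_eq' R.simples (w γ) (fun β => β), if_pos hs]
  have hcoord := coords_unique R (fun β => if β = w γ then (1:ℝ) else 0)
      (fun β => (d β : ℝ) + (S β : ℝ)) (by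
    rw [← hwγ, hkey, hd, ← Finset.sum_add_distrib]
    refine Finset.sum_congr rfl (fun β _ => ?_)
    rw [add_smul])
  by_cases hS0 : ∀ β ∈ R.simples, S β = 0
  · -- then w γ = w y
    have : w γ = w y := by
      rw [hkey, Finset.sum_eq_zero (fun β hβ => by rw [hS0 β hβ]; simp), add_zero]
    exact (hinj _ _ this).symm
  · exfalso
    push_neg at hS0
    obtain ⟨β₀, hβ₀s, hβ₀⟩ := hS0
    have hβ₀eq : β₀ = w γ := by
      by_contra hne
      have := hcoord β₀ hβ₀s
      simp only [if_neg hne] at this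
      have hd0 : (0:ℝ) ≤ (d β₀ : ℝ) := Nat.cast_nonneg _
      have hS0' : (0:ℝ) ≤ (S β₀ : ℝ) := Nat.cast_nonneg _
      have : (S β₀ : ℝ) = 0 := by linarith
      exact hβ₀ (Nat.cast_eq_zero.1 this)
    rw [hβ₀eq] at hβ₀
    have h1 := hcoord (w γ) hs
    norm_num at h1
    have hS1 : (1:ℝ) ≤ (S (w γ) : ℝ) := by exact_mod_cast Nat.one_le_iff_ne_zero.2 hβ₀
    have hd0 : (d (w γ) : ℝ) = 0 := by
      have : (0:ℝ) ≤ (d (w γ) : ℝ) := Nat.cast_nonneg _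
      linarith
    -- all other coordinates of w y vanish as well
    have hdall : ∀ β ∈ R.simples, (d β : ℝ) = 0 := by
      intro β hβ
      by_cases hne : β = w γ
      · rw [hne]; exact hd0
      · have := hcoord β hβ
        simp only [if_neg hne] at this
        have h2 : (0:ℝ) ≤ (d β : ℝ) := Nat.cast_nonneg _
        have h3 : (0:ℝ) ≤ (S β : ℝ) := Nat.cast_nonneg _
        linarith
    have : w y = 0 := by
      rw [hd, Finset.sum_eq_zero (fun β hβ => by rw [hdall β hβ, zero_smul])]
    exact R.zero_not_mem (this ▸ R.pos_subset hwy_pos)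

lemma key_nonmin (hab : ∀ γ ∈ R.roots, ℓ γ = -1 ∨ ℓ γ = 0 ∨ ℓ γ = 1)
    (hsimp : ∀ α ∈ R.simples, 0 ≤ ℓ α)
    (w w' : Function.End V) (hww' : w * w' = 1) (hw'w : w' * w = 1)
    (Gw : GoodEnd R w) (Gw' : GoodEnd R w')
    (hw0 : ∀ α, α ∈ R.pos → ℓ α = 0 → w α ∈ R.pos)
    {γ : V} (hγ : γ ∈ idealOf R ℓ w) (hns : w γ ∉ R.simples) :
    ∃ μ ∈ idealOf R ℓ w, rootLEon R.simples {α | ℓ α = 0} μ γ ∧ μ ≠ γ := by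
  classical
  have hw'w_app : ∀ x : V, w' (w x) = x := fun x => congrFun hw'w x
  have hww'_app : ∀ x : V, w (w' x) = x := fun x => congrFun hww' x
  have wneg : ∀ x : V, w (-x) = - w x := fun x => by simpa using Gw.2.1 (-1) x
  have wsub : ∀ x y : V, w (x - y) = w x - w y := fun x y => by
    rw [sub_eq_add_neg, Gw.1, wneg, ← sub_eq_add_neg]
  have w'neg : ∀ x : V, w' (-x) = - w' x := fun x => by simpa using Gw'.2.1 (-1) x
  have w'sub : ∀ x y : V, w' (x - y) = w' x - w' y := fun x y => by
    rw [sub_eq_add_neg, Gw'.1, w'neg, ← sub_eq_add_neg]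
  obtain ⟨⟨hγr, hγ1⟩, hγinv⟩ := hγ
  have hγpos : γ ∈ R.pos := pos_of_grade_pos R ℓ hsimp hγr (by rw [hγ1]; norm_num)
  have hβr : w γ ∈ R.roots := Gw.2.2.2 γ hγr
  have hβpos : w γ ∈ R.pos := by
    rcases R.pos_or_neg _ hβr with h | h
    · exact h
    · exact absurd ⟨hγpos, h⟩ hγinv
  obtain ⟨cb, hcb⟩ := R.pos_combo _ hβpos
  -- a simple root pairing strictly positively with `w γ`
  have hββ : (0:ℝ) < inner ℝ (w γ) (w γ) := RS.inner_self_pos R hβr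
  have hex : ∃ α ∈ R.simples, (0:ℝ) < inner ℝ (w γ) α := by
    by_contra hcon
    push_neg at hcon
    have h2 : (inner ℝ (w γ) (w γ) : ℝ)
        = ∑ α ∈ R.simples, (cb α : ℝ) * (inner ℝ (w γ) α : ℝ) := by
      nth_rewrite 2 [hcb]
      rw [inner_sum]
      exact Finset.sum_congr rfl (fun α _ => real_inner_smul_right _ _ _)
    have h3 : (inner ℝ (w γ) (w γ) : ℝ) ≤ 0 := by
      rw [h2]
      exact Finset.sum_nonpos (fun α hα =>
        mul_nonpos_of_nonneg_of_nonpos (Nat.cast_nonneg _) (hcon α hα))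
    linarith
  obtain ⟨α, hαs, hαin⟩ := hex
  have hαr : α ∈ R.roots := R.pos_subset (R.simples_subset hαs)
  have hαα : (0:ℝ) < inner ℝ α α := RS.inner_self_pos R hαr
  obtain ⟨n, hn⟩ := R.crystallographic (w γ) hβr α hαr
  have hnposR : (0:ℝ) < (n:ℝ) := by rw [← hn]; exact div_pos (by linarith) hαα
  have hn1 : (1:ℤ) ≤ n := by
    have : (0:ℤ) < n := by exact_mod_cast hnposR
    omega
  have hn1R : (1:ℝ) ≤ (n:ℝ) := by exact_mod_cast hn1
  have hνr : w γ - (n:ℝ) • α ∈ R.roots := by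
    have := R.reflect_mem (w γ) hβr α hαr
    rwa [hn] at this
  -- a simple root different from α with a positive coefficient in w γ
  have hγ0 : ∃ γ₀ ∈ R.simples, γ₀ ≠ α ∧ 0 < cb γ₀ := by
    by_contra hcon
    push_neg at hcon
    have hwγα : w γ = (cb α : ℝ) • α := by
      rw [hcb, Finset.sum_eq_single α]
      · intro b hb hbne
        have h0 : cb b = 0 := Nat.le_zero.1 (hcon b hb hbne)
        rw [h0]; simp
      · intro h; exact absurd hαs h
    have hroot : (cb α : ℝ) • α ∈ R.roots := hwγα ▸ hβr
    rcases R.reduced α hαr (cb α) hroot with h1 | h1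
    · rw [h1, one_smul] at hwγα
      exact hns (hwγα ▸ hαs)
    · have h2 : (0:ℝ) ≤ (cb α : ℝ) := Nat.cast_nonneg _
      rw [h1] at h2; linarith
  obtain ⟨γ₀, hγ₀s, hγ₀ne, hγ₀pos⟩ := hγ0
  -- coordinate expression of ν := w γ - n • α
  have hνsum : w γ - (n:ℝ) • α
      = ∑ β' ∈ R.simples, ((cb β' : ℝ) - (if β' = α then (n:ℝ) else 0)) • β' := by
    have hα' : (n:ℝ) • α = ∑ β' ∈ R.simples, (if β' = α then (n:ℝ) else 0) • β' := by
      simp only [ite_smul, zero_smul]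
      rw [Finset.sum_ite_eq' R.simples α (fun β' => (n:ℝ) • β'), if_pos hαs]
    rw [hcb, hα', ← Finset.sum_sub_distrib]
    exact Finset.sum_congr rfl (fun β' _ => (sub_smul _ _ _).symm)
  have hνpos : w γ - (n:ℝ) • α ∈ R.pos := by
    rcases R.pos_or_neg _ hνr with h | h
    · exact h
    · exfalso
      refine not_pos_of_neg_coord R h
        (fun β' => (if β' = α then (n:ℝ) else 0) - (cb β' : ℝ)) ?_ hγ₀s ?_
      · rw [hνsum, ← Finset.sum_neg_distrib]
        exact Finset.sum_congr rfl (fun β' _ => by rw [← neg_smul, neg_sub])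
      · simp only [if_neg hγ₀ne, zero_sub, neg_neg]
        have : (0:ℝ) < (cb γ₀ : ℝ) := by exact_mod_cast hγ₀pos
        linarith
  -- δ := w' α and μ := w' ν
  have hδr : w' α ∈ R.roots := Gw'.2.2.2 α hαr
  have hwδ : w (w' α) = α := hww'_app α
  have hμr : w' (w γ - (n:ℝ) • α) ∈ R.roots := Gw'.2.2.2 _ hνr
  have hμeq : w' (w γ - (n:ℝ) • α) = γ - (n:ℝ) • w' α := by
    rw [w'sub, hw'w_app, Gw'.2.1]
  have hℓμ : ℓ (w' (w γ - (n:ℝ) • α)) = 1 - (n:ℝ) * ℓ (w' α) := by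
    rw [hμeq, map_sub, map_smul, hγ1]; simp
  rcases hab _ hδr with hδ | hδ | hδ
  · -- ℓ (w' α) = -1 : impossible since then ℓ μ = 1 + n ≥ 2
    exfalso
    rcases hab _ hμr with h | h | h <;> rw [hℓμ, hδ] at h <;> ring_nf at h <;> linarith
  · -- ℓ (w' α) = 0 : take μ := w' ν = γ - n • w' α
    have hμ1 : ℓ (w' (w γ - (n:ℝ) • α)) = 1 := by rw [hℓμ, hδ]; ring
    have hμpos : w' (w γ - (n:ℝ) • α) ∈ R.pos :=
      pos_of_grade_pos R ℓ hsimp hμr (by rw [hμ1]; norm_num)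
    have hwμ : w (w' (w γ - (n:ℝ) • α)) = w γ - (n:ℝ) • α := hww'_app _
    have hμideal : w' (w γ - (n:ℝ) • α) ∈ idealOf R ℓ w := by
      refine ⟨⟨hμr, hμ1⟩, ?_⟩
      rintro ⟨-, hneg⟩
      rw [hwμ] at hneg
      exact R.pos_neg_disjoint _ hνpos hneg
    have hδpos : w' α ∈ R.pos := by
      rcases R.pos_or_neg _ hδr with h | h
      · exact h
      · exfalso
        have hℓn : ℓ (-(w' α)) = 0 := by rw [map_neg, hδ, neg_zero]
        have hin := hw0 _ h hℓn
        rw [wneg, hww'_app] at hin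
        exact R.pos_neg_disjoint α (R.simples_subset hαs) hin
    have hcast : ((n.toNat : ℕ) : ℝ) = (n:ℝ) := by
      have h0 : (n.toNat : ℤ) = n := Int.toNat_of_nonneg (by omega)
      exact_mod_cast congrArg (fun z : ℤ => (z:ℝ)) h0
    have hγeq : γ = w' (w γ - (n:ℝ) • α) + ((n.toNat : ℕ) : ℝ) • w' α := by
      rw [hμeq, hcast]; abel
    have hLE := rootLEon_of_grade0 R ℓ hsimp hδpos hδ n.toNat (w' (w γ - (n:ℝ) • α))
    rw [← hγeq] at hLE
    refine ⟨_, hμideal, hLE, ?_⟩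
    intro h
    rw [hμeq] at h
    have h0 : (n:ℝ) • w' α = 0 := by
      have := sub_eq_self.1 h
      simpa using this
    rcases smul_eq_zero.1 h0 with h' | h'
    · exact absurd h' (ne_of_gt hnposR)
    · exact RS.root_ne_zero R hδr h'
  · -- ℓ (w' α) = 1 : take μ := w' α = δ
    have hδpos : w' α ∈ R.pos :=
      pos_of_grade_pos R ℓ hsimp hδr (by rw [hδ]; norm_num)
    have hδideal : w' α ∈ idealOf R ℓ w := by
      refine ⟨⟨hδr, hδ⟩, ?_⟩
      rintro ⟨-, hneg⟩
      rw [hwδ] at hneg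
      exact R.pos_neg_disjoint α (R.simples_subset hαs) hneg
    have hδne : w' α ≠ γ := by
      intro h
      apply hns
      rw [← h, hwδ]
      exact hαs
    have hμvals := hab _ hμr
    rw [hℓμ, hδ, mul_one] at hμvals
    have hn12 : n = 1 ∨ n = 2 := by
      rcases hμvals with h | h | h
      · right
        have : (n:ℝ) = 2 := by linarith
        exact_mod_cast this
      · left
        have : (n:ℝ) = 1 := by linarith
        exact_mod_cast this
      · exfalso; linarith
    -- σ := γ - w' α is a root
    have hσr : γ - w' α ∈ R.roots := by
      rcases hn12 with h1 | h2
      · have heq : γ - w' α = w' (w γ - (n:ℝ) • α) := by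
          rw [hμeq, h1]
          norm_num
        rw [heq]; exact hμr
      · -- n = 2 : pairing argument
        have hδδ : (inner ℝ (w' α) (w' α) : ℝ) = inner ℝ α α := Gw'.2.2.1 α α
        have hγδ : (inner ℝ γ (w' α) : ℝ) = inner ℝ (w γ) α := by
          conv_lhs => rw [← hw'w_app γ]
          exact Gw'.2.2.1 (w γ) α
        have h2R : (n:ℝ) = 2 := by exact_mod_cast h2
        have hinner : (inner ℝ (w γ) α : ℝ) = inner ℝ α α := by
          have h' := hn
          rw [h2R] at h'
          field_simp at h'
          linarith
        obtain ⟨m, hm⟩ := R.crystallographic (w' α) hδr γ hγr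
        have hγγ : (0:ℝ) < inner ℝ γ γ := RS.inner_self_pos R hγr
        have hδγ : (inner ℝ (w' α) γ : ℝ) = inner ℝ α α := by
          rw [real_inner_comm, hγδ, hinner]
        have hmpos : (0:ℝ) < (m:ℝ) := by
          rw [← hm, hδγ]
          exact div_pos (by linarith) hγγ
        have hγne : γ - w' α ≠ 0 := by
          intro h
          exact hδne (sub_eq_zero.1 h).symm
        have hQ : (0:ℝ) < inner ℝ (γ - w' α) (γ - w' α) :=
          lt_of_le_of_ne real_inner_self_nonneg
            (fun h => hγne (inner_self_eq_zero.1 h.symm))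
        have hQval : (inner ℝ (γ - w' α) (γ - w' α) : ℝ)
            = (inner ℝ γ γ : ℝ) - (inner ℝ α α : ℝ) := by
          simp only [inner_sub_left, inner_sub_right]
          rw [hγδ, hinner, hδγ, hδδ]
          ring
        have hαα2 : (inner ℝ α α : ℝ) = (m:ℝ) * (inner ℝ γ γ : ℝ) / 2 := by
          have h' := hm
          rw [hδγ] at h'
          field_simp at h'
          linarith
        have hm1 : (m:ℝ) = 1 := by
          have hlt : (m:ℝ) < 2 := by nlinarith
          have hmi : (0:ℤ) < m := by exact_mod_cast hmpos
          have hmi2 : m < 2 := by exact_mod_cast hlt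
          have : m = 1 := by omega
          rw [this]; norm_num
        have hrefl := R.reflect_mem (w' α) hδr γ hγr
        rw [hm, hm1, one_smul] at hrefl
        have hneg := R.neg_mem _ hrefl
        rwa [neg_sub] at hneg
    -- σ is positive
    have hσpos : γ - w' α ∈ R.pos := by
      rcases R.pos_or_neg _ hσr with h | h
      · exact h
      · exfalso
        have hℓ0 : ℓ (-(γ - w' α)) = 0 := by rw [map_neg, map_sub, hγ1, hδ]; ring
        have hwin := hw0 _ h hℓ0
        have hwval : w (-(γ - w' α)) = α - w γ := by
          rw [wneg, wsub, hwδ, neg_sub]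
        rw [hwval] at hwin
        refine not_pos_of_neg_coord R hwin
          (fun β' => (if β' = α then (1:ℝ) else 0) - (cb β' : ℝ)) ?_ hγ₀s ?_
        · have hα' : α = ∑ β' ∈ R.simples, (if β' = α then (1:ℝ) else 0) • β' := by
            simp only [ite_smul, one_smul, zero_smul]
            rw [Finset.sum_ite_eq' R.simples α (fun β' => β'), if_pos hαs]
          conv_lhs => rw [hα', hcb]
          rw [← Finset.sum_sub_distrib]
          exact Finset.sum_congr rfl (fun β' _ => (sub_smul _ _ _).symm)
        · simp only [if_neg hγ₀ne, zero_sub]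
          have : (0:ℝ) < (cb γ₀ : ℝ) := by exact_mod_cast hγ₀pos
          linarith
    -- conclude
    have hσ0 : ℓ (γ - w' α) = 0 := by rw [map_sub, hγ1, hδ]; ring
    have hLE := rootLEon_of_grade0 R ℓ hsimp hσpos hσ0 1 (w' α)
    rw [show w' α + ((1:ℕ):ℝ) • (γ - w' α) = γ by push_cast; rw [one_smul]; abel] at hLE
    exact ⟨_, hδideal, hLE, hδne⟩

end AbelianKey

/-- Abelian case: for `w ∈ W⁰`, a root `γ ∈ I_w = Δ(1) \ N(w)` is a minimal element of `I_w`
iff `w(γ)` is a simple root; equivalently `min(I_w) = w⁻¹(Π) ∩ Δ(1)`. -/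
theorem abelian_min_of_ideal (R : RootSystemData V) (ℓ : V →ₗ[ℝ] ℝ)
    (hab : ∀ γ ∈ R.roots, ℓ γ = -1 ∨ ℓ γ = 0 ∨ ℓ γ = 1)
    (hsimp : ∀ α ∈ R.simples, 0 ≤ ℓ α)
    (w : Function.End V) (hw : w ∈ minLengthReps R ℓ) :
    (∀ γ ∈ idealOf R ℓ w,
        (γ ∈ minimalsRel (rootLEon R.simples {α | ℓ α = 0}) (idealOf R ℓ w) ↔
          w γ ∈ R.simples)) ∧
    minimalsRel (rootLEon R.simples {α | ℓ α = 0}) (idealOf R ℓ w)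
      = {γ : V | w γ ∈ R.simples} ∩ gradeOne R ℓ := by
  obtain ⟨hwW, hw0⟩ := hw
  obtain ⟨w', hww', hw'w, Gw, Gw'⟩ := weyl_good R hwW
  have main : ∀ γ ∈ idealOf R ℓ w,
      (γ ∈ minimalsRel (rootLEon R.simples {α | ℓ α = 0}) (idealOf R ℓ w) ↔
        w γ ∈ R.simples) := by
    intro γ hγ
    constructor
    · intro hmin
      by_contra hns
      obtain ⟨μ, hμI, hle, hne⟩ := key_nonmin R ℓ hab hsimp w w' hww' hw'w Gw Gw' hw0 hγ hns
      exact hne (hmin.2 μ hμI hle)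
    · intro hs
      exact key_min R ℓ hsimp w w' hw'w Gw hw0 hγ hs
  refine ⟨main, ?_⟩
  ext γ
  constructor
  · intro hmin
    exact ⟨(main γ hmin.1).1 hmin, hmin.1.1⟩
  · rintro ⟨hs, hg1⟩
    have hγI : γ ∈ idealOf R ℓ w := by
      refine ⟨hg1, ?_⟩
      rintro ⟨-, hneg⟩
      exact R.pos_neg_disjoint _ (R.simples_subset hs) hneg
    exact key_min R ℓ hsimp w w' hw'w Gw hw0 hγI hs
end

section
/- In the extra-special setting (Δ⁺ = Δ(0)⁺ ⊔ Δ(1) ⊔ {θ} where Δ(i) = {γ ∈ Δ⁺ : (γ, θ∨) = i}), let I ⊆ Δ(1) be an upper ideal with respect to the order where γ covers μ iff γ − μ ∈ Π(0). If there exist γ₁, γ₂ ∈ I with γ₁ + γ₂ = θ, then there is no pair μ₁, μ₂ ∈ Δ(1) \ I with μ₁ + μ₂ = θ. -/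
variable {V : Type*} [NormedAddCommGroup V] [InnerProductSpace ℝ V]

/-- `Δ(1) = {γ ∈ Δ⁺ : (γ, θ∨) = 1}`, the positive roots at level one. -/
noncomputable def levelOnePos (R : RootSystemData V) (θ : V) : Set V :=
  {γ | γ ∈ R.pos ∧ copair θ γ = 1}

lemma sub_mem_of_inner_pos (R : RootSystemData V) {α β : V}
    (hα : α ∈ R.roots) (hβ : β ∈ R.roots) (hip : 0 < (inner ℝ α β : ℝ)) (hne : α ≠ β) :
    α - β ∈ R.roots := by
  have hα0 : α ≠ 0 := fun h => R.zero_not_mem (h ▸ hα)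
  have hβ0 : β ≠ 0 := fun h => R.zero_not_mem (h ▸ hβ)
  have hαα : 0 < (inner ℝ α α : ℝ) := by
    rw [real_inner_self_eq_norm_mul_norm]
    exact mul_pos (norm_pos_iff.mpr hα0) (norm_pos_iff.mpr hα0)
  have hββ : 0 < (inner ℝ β β : ℝ) := by
    rw [real_inner_self_eq_norm_mul_norm]
    exact mul_pos (norm_pos_iff.mpr hβ0) (norm_pos_iff.mpr hβ0)
  obtain ⟨n, hn⟩ := R.crystallographic α hα β hβ
  obtain ⟨m, hm⟩ := R.crystallographic β hβ α hα
  have hcomm : (inner ℝ β α : ℝ) = (inner ℝ α β : ℝ) := real_inner_comm α β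
  have hn1 : 1 ≤ n := by
    have h0 : (0:ℝ) < (n:ℝ) := by rw [← hn]; positivity
    have : (0:ℤ) < n := by exact_mod_cast h0
    omega
  have hm1 : 1 ≤ m := by
    have h0 : (0:ℝ) < (m:ℝ) := by rw [← hm, hcomm]; positivity
    have : (0:ℤ) < m := by exact_mod_cast h0
    omega
  by_cases hne1 : n = 1
  · have := R.reflect_mem α hα β hβ
    rw [hn, hne1] at this
    simpa using this
  by_cases hme1 : m = 1
  · have := R.reflect_mem β hβ α hα
    rw [hm, hme1] at this
    have := R.neg_mem _ this
    simpa using this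
  · -- n ≥ 2, m ≥ 2 : contradiction
    exfalso
    have hn2 : (2:ℤ) ≤ n := by omega
    have hm2 : (2:ℤ) ≤ m := by omega
    -- not parallel
    have hnp : ‖β‖ • α ≠ ‖α‖ • β := by
      intro h
      have hna : (‖α‖:ℝ) ≠ 0 := norm_ne_zero_iff.mpr hα0
      have hβa : (‖β‖ / ‖α‖) • α = β := by
        rw [div_eq_inv_mul, mul_smul, h, inv_smul_smul₀ hna]
      have := R.reduced α hα (‖β‖ / ‖α‖) (by rw [hβa]; exact hβ)
      have hpos : 0 < ‖β‖ / ‖α‖ :=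
        div_pos (norm_pos_iff.mpr hβ0) (norm_pos_iff.mpr hα0)
      rcases this with h1 | h1
      · rw [h1, one_smul] at hβa; exact hne hβa
      · rw [h1] at hpos; norm_num at hpos
    have hCS : (inner ℝ α β : ℝ) < ‖α‖ * ‖β‖ := inner_lt_norm_mul_iff_real.mpr hnp
    have hsq : (inner ℝ α β : ℝ) * (inner ℝ α β : ℝ) < (inner ℝ α α : ℝ) * (inner ℝ β β : ℝ) := by
      have h1 : (inner ℝ α α : ℝ) = ‖α‖ * ‖α‖ := real_inner_self_eq_norm_mul_norm α
      have h2 : (inner ℝ β β : ℝ) = ‖β‖ * ‖β‖ := real_inner_self_eq_norm_mul_norm β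
      rw [h1, h2]
      nlinarith [hip, hCS, norm_nonneg α, norm_nonneg β]
    have e1 : 2 * (inner ℝ α β : ℝ) = n * (inner ℝ β β : ℝ) := by
      field_simp [ne_of_gt hββ] at hn; linarith [hn]
    have e2 : 2 * (inner ℝ α β : ℝ) = m * (inner ℝ α α : ℝ) := by
      rw [← hcomm]; field_simp [ne_of_gt hαα] at hm; linarith [hm]
    have hn2' : (2:ℝ) ≤ (n:ℝ) := by exact_mod_cast hn2
    have hm2' : (2:ℝ) ≤ (m:ℝ) := by exact_mod_cast hm2
    have key : ((n:ℝ) * (inner ℝ β β : ℝ)) * ((m:ℝ) * (inner ℝ α α : ℝ))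
        = (2 * (inner ℝ α β : ℝ)) * (2 * (inner ℝ α β : ℝ)) := by rw [← e1, ← e2]
    have hnm : (4:ℝ) ≤ (n:ℝ) * (m:ℝ) := by nlinarith [hn2', hm2']
    nlinarith [key, hsq, mul_pos hαα hββ, hnm,
      mul_le_mul_of_nonneg_right hnm (le_of_lt (mul_pos hββ hαα))]

lemma copair_linear_sum (θ : V) (s : Finset V) (c : V → ℕ) :
    copair θ (∑ α ∈ s, (c α : ℝ) • α) = ∑ α ∈ s, (c α : ℝ) * copair θ α := by
  simp only [copair, sum_inner, real_inner_smul_left, Finset.sum_div, Finset.mul_sum]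
  exact Finset.sum_congr rfl fun α _ => by ring

lemma copair_sub (θ x y : V) : copair θ (x - y) = copair θ x - copair θ y := by
  simp only [copair, inner_sub_left]
  ring

lemma leOn_of_level_zero (R : RootSystemData V) (θ : V) (hθ : θ ∈ R.pos)
    (hextra : ∀ γ ∈ R.pos, copair θ γ = 0 ∨ copair θ γ = 1 ∨ γ = θ)
    {δ : V} (hδ : δ ∈ R.pos) (hδ0 : copair θ δ = 0) (x : V) :
    rootLEon R.simples {α | copair θ α = 0} x (x + δ) := by
  have hθ0 : θ ≠ 0 := fun h => R.zero_not_mem (h ▸ R.pos_subset hθ)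
  have hθθ : 0 < (inner ℝ θ θ : ℝ) := by
    rw [real_inner_self_eq_norm_mul_norm]
    exact mul_pos (norm_pos_iff.mpr hθ0) (norm_pos_iff.mpr hθ0)
  have hcθ : copair θ θ = 2 := by
    unfold copair; field_simp
  have hnn : ∀ α ∈ R.simples, 0 ≤ copair θ α := by
    intro α hα
    rcases hextra α (R.simples_subset hα) with h | h | h
    · rw [h]
    · rw [h]; norm_num
    · rw [h, hcθ]; norm_num
  obtain ⟨c, hc⟩ := R.pos_combo δ hδ
  have hzero : ∀ α ∈ R.simples, (c α : ℝ) * copair θ α = 0 := by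
    have hs : ∑ α ∈ R.simples, (c α : ℝ) * copair θ α = 0 := by
      rw [← copair_linear_sum, ← hc, hδ0]
    intro α hα
    have := (Finset.sum_eq_zero_iff_of_nonneg (fun α hα =>
      mul_nonneg (by positivity) (hnn α hα))).mp hs
    exact this α hα
  classical
  refine ⟨fun α => if α ∈ R.simples ∧ copair θ α = 0 then c α else 0, ?_, ?_⟩
  · intro α hα
    simp only [Set.mem_setOf_eq] at hα
    simp [hα]
  · congr 1
    rw [hc]
    apply Finset.sum_congr rfl
    intro α hα
    by_cases h0 : copair θ α = 0
    · simp [hα, h0]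
    · have : (c α : ℝ) = 0 := by
        rcases mul_eq_zero.mp (hzero α hα) with h | h
        · exact h
        · exact absurd h h0
      simp [hα, h0, this]

/-- Extra-special setting (`Δ⁺ = Δ(0)⁺ ⊔ Δ(1) ⊔ {θ}`): if `I ⊆ Δ(1)` is an upper ideal
(for the order generated by adding simple roots from `Π(0)`) containing a pair summing to
`θ`, then no pair in `Δ(1) \ I` sums to `θ`. -/
theorem extraSpecial_no_complementary_pair (R : RootSystemData V)
    (θ : V) (hθ : θ ∈ R.pos)
    (hhigh : ∀ γ ∈ R.pos, ∃ c : V → ℕ, θ = γ + ∑ α ∈ R.simples, (c α : ℝ) • α)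
    (hextra : ∀ γ ∈ R.pos, copair θ γ = 0 ∨ copair θ γ = 1 ∨ γ = θ)
    (I : Set V) (hIsub : I ⊆ levelOnePos R θ)
    (hup : ∀ μ ∈ I, ∀ γ ∈ levelOnePos R θ,
        rootLEon R.simples {α | copair θ α = 0} μ γ → γ ∈ I)
    (γ₁ : V) (h1 : γ₁ ∈ I) (γ₂ : V) (h2 : γ₂ ∈ I) (hsum : γ₁ + γ₂ = θ) :
    ¬ ∃ μ₁ ∈ levelOnePos R θ \ I, ∃ μ₂ ∈ levelOnePos R θ \ I, μ₁ + μ₂ = θ := by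
  rintro ⟨μ₁, ⟨hμ₁L, hμ₁I⟩, μ₂, ⟨hμ₂L, hμ₂I⟩, hsum'⟩
  have hθ0 : θ ≠ 0 := fun h => R.zero_not_mem (h ▸ R.pos_subset hθ)
  have hθθ : 0 < (inner ℝ θ θ : ℝ) := by
    rw [real_inner_self_eq_norm_mul_norm]
    exact mul_pos (norm_pos_iff.mpr hθ0) (norm_pos_iff.mpr hθ0)
  -- the key case analysis
  have key : ∀ γ ∈ I, ∀ γ' ∈ I, ∀ μ, μ ∈ levelOnePos R θ → μ ∉ I →
      ∀ μ', μ' ∈ levelOnePos R θ → μ' ∉ I →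
      γ + γ' = θ → μ + μ' = θ → 0 < (inner ℝ γ μ : ℝ) → False := by
    intro γ hγ γ' hγ' μ hμL hμI μ' hμ'L hμ'I hgs hms hip
    have hγL := hIsub hγ
    have hγ'L := hIsub hγ'
    have hne : γ ≠ μ := fun h => hμI (h ▸ hγ)
    have hδroot : γ - μ ∈ R.roots :=
      sub_mem_of_inner_pos R (R.pos_subset hγL.1) (R.pos_subset hμL.1) hip hne
    have hδ0 : copair θ (γ - μ) = 0 := by
      rw [copair_sub, hγL.2, hμL.2]; ring
    rcases R.pos_or_neg _ hδroot with hp | hp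
    · -- γ - μ positive: μ' = γ' + (γ - μ), so γ' ≤ μ', μ' ∈ I, contradiction
      have hle := leOn_of_level_zero R θ hθ hextra hp hδ0 γ'
      have heq : γ' + (γ - μ) = μ' := by
        have h : γ + γ' = μ + μ' := by rw [hgs, hms]
        have h2 : μ' = (γ + γ') - μ := by rw [h]; abel
        rw [h2]; abel
      rw [heq] at hle
      exact hμ'I (hup γ' hγ' μ' hμ'L hle)
    · -- μ - γ positive: μ = γ + (μ - γ), so γ ≤ μ, μ ∈ I, contradiction
      rw [neg_sub] at hp
      have hδ0' : copair θ (μ - γ) = 0 := by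
        rw [copair_sub, hγL.2, hμL.2]; ring
      have hle := leOn_of_level_zero R θ hθ hextra hp hδ0' γ
      have heq : γ + (μ - γ) = μ := by abel
      rw [heq] at hle
      exact hμI (hup γ hγ μ hμL hle)
  -- some pair has positive inner product
  have hexp : (inner ℝ θ θ : ℝ) = (inner ℝ γ₁ μ₁ : ℝ) + (inner ℝ γ₁ μ₂ : ℝ)
      + (inner ℝ γ₂ μ₁ : ℝ) + (inner ℝ γ₂ μ₂ : ℝ) := by
    have h : (inner ℝ (γ₁ + γ₂) (μ₁ + μ₂) : ℝ) = (inner ℝ γ₁ μ₁ : ℝ) + (inner ℝ γ₁ μ₂ : ℝ)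
        + (inner ℝ γ₂ μ₁ : ℝ) + (inner ℝ γ₂ μ₂ : ℝ) := by
      simp only [inner_add_left, inner_add_right]; ring
    rw [hsum, hsum'] at h
    exact h
  by_cases c11 : 0 < (inner ℝ γ₁ μ₁ : ℝ)
  · exact key γ₁ h1 γ₂ h2 μ₁ hμ₁L hμ₁I μ₂ hμ₂L hμ₂I hsum hsum' c11
  by_cases c12 : 0 < (inner ℝ γ₁ μ₂ : ℝ)
  · exact key γ₁ h1 γ₂ h2 μ₂ hμ₂L hμ₂I μ₁ hμ₁L hμ₁I hsum
      (by rw [add_comm]; exact hsum') c12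
  by_cases c21 : 0 < (inner ℝ γ₂ μ₁ : ℝ)
  · exact key γ₂ h2 γ₁ h1 μ₁ hμ₁L hμ₁I μ₂ hμ₂L hμ₂I
      (by rw [add_comm]; exact hsum) hsum' c21
  by_cases c22 : 0 < (inner ℝ γ₂ μ₂ : ℝ)
  · exact key γ₂ h2 γ₁ h1 μ₂ hμ₂L hμ₂I μ₁ hμ₁L hμ₁I
      (by rw [add_comm]; exact hsum) (by rw [add_comm]; exact hsum') c22
  · push_neg at c11 c12 c21 c22
    linarith [hθθ, hexp, c11, c12, c21, c22]
end

section
/- Let Δ be an irreducible root system with highest root θ and dual Coxeter number h*. The number of roots γ ∈ Δ with (γ, θ∨) = 1 equals 2h* − 4. -/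
variable {V : Type*} [NormedAddCommGroup V] [InnerProductSpace ℝ V]

/-- `Δ(1) = {γ ∈ Δ : (γ, θ∨) = 1}`. -/
noncomputable def levelOne (R : RootSystemData V) (θ : V) : Set V :=
  {γ | γ ∈ R.roots ∧ copair θ γ = 1}


section CardLevelOneAux

namespace RootSystemData

variable (R : RootSystemData V)

lemma root_ne_zero {γ : V} (h : γ ∈ R.roots) : γ ≠ 0 :=
  fun e => R.zero_not_mem (e ▸ h)

lemma root_inner_self_pos {γ : V} (h : γ ∈ R.roots) : 0 < (inner ℝ γ γ : ℝ) := by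
  have hne : (inner ℝ γ γ : ℝ) ≠ 0 := (inner_self_ne_zero (𝕜 := ℝ)).mpr (R.root_ne_zero h)
  exact lt_of_le_of_ne real_inner_self_nonneg (Ne.symm hne)

lemma coeffs_zero (f : V → ℝ)
    (h : ∑ α ∈ R.simples, f α • α = 0) : ∀ α ∈ R.simples, f α = 0 := by
  have h2 : ∑ α : {x // x ∈ R.simples}, f α • (α : V) = 0 := by
    rw [Finset.sum_coe_sort R.simples (fun i => f i • i)]; exact h
  intro α hα
  exact Fintype.linearIndependent_iff.mp R.simples_indep (fun α => f α) h2 ⟨α, hα⟩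

end RootSystemData

private lemma split2 (S : Finset V) (d t : V → ℕ) :
    ∑ α ∈ S, ((d α : ℝ) + (t α : ℝ)) • α
      = (∑ α ∈ S, (d α : ℝ) • α) + (∑ α ∈ S, (t α : ℝ) • α) := by
  rw [← Finset.sum_add_distrib]
  exact Finset.sum_congr rfl fun α _ => add_smul _ _ _

private lemma split3 (S : Finset V) (b : ℝ) (d t g : V → ℕ) :
    ∑ α ∈ S, ((d α : ℝ) + (t α : ℝ) + b * (g α : ℝ)) • α
      = (∑ α ∈ S, (d α : ℝ) • α) + (∑ α ∈ S, (t α : ℝ) • α)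
        + b • (∑ α ∈ S, (g α : ℝ) • α) := by
  rw [Finset.smul_sum, ← Finset.sum_add_distrib, ← Finset.sum_add_distrib]
  exact Finset.sum_congr rfl fun α _ => by rw [smul_smul, ← add_smul, ← add_smul]

private lemma forced_zero (R : RootSystemData V) {n : ℝ} (hn : n < 0) (d t g : V → ℕ)
    (h : ∀ α ∈ R.simples, (d α : ℝ) + (t α : ℝ) + (-n) * (g α : ℝ) = 0) :
    ∀ α ∈ R.simples, (g α : ℝ) = 0 := by
  intro α hα
  have h1 : (0:ℝ) ≤ (d α : ℝ) := Nat.cast_nonneg _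
  have h2 : (0:ℝ) ≤ (t α : ℝ) := Nat.cast_nonneg _
  have h3 : (0:ℝ) ≤ (g α : ℝ) := Nat.cast_nonneg _
  have h4 : (0:ℝ) ≤ -n * (g α : ℝ) := mul_nonneg (by linarith) h3
  have h5 : -n * (g α : ℝ) = 0 := le_antisymm (by have := h α hα; linarith) h4
  rcases mul_eq_zero.mp h5 with h6 | h6
  · linarith
  · exact h6

private lemma inner_nat_combo (S : Finset V) (g : V → ℕ) (x : V) :
    (inner ℝ (∑ α ∈ S, (g α : ℝ) • α) x : ℝ) = ∑ α ∈ S, (g α : ℝ) * (inner ℝ α x : ℝ) := by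
  rw [sum_inner]
  exact Finset.sum_congr rfl fun α _ => real_inner_smul_left α x _

/-- Every positive root has nonnegative inner ℝ product with the highest root. -/
private lemma posA (R : RootSystemData V) (θ : V) (hθ : θ ∈ R.pos)
    (hhigh : ∀ γ ∈ R.pos, ∃ c : V → ℕ, θ = γ + ∑ α ∈ R.simples, (c α : ℝ) • α) :
    ∀ γ ∈ R.pos, 0 ≤ (inner ℝ γ θ : ℝ) := by
  intro γ hγ
  by_contra hneg
  push_neg at hneg
  have hγr := R.pos_subset hγ
  have hθr := R.pos_subset hθ
  have hγγ : 0 < (inner ℝ γ γ : ℝ) := R.root_inner_self_pos hγr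
  obtain ⟨n, hn⟩ := R.crystallographic θ hθr γ hγr
  have hθγ : (inner ℝ θ γ : ℝ) < 0 := by rw [real_inner_comm]; exact hneg
  have hnneg : (n : ℝ) < 0 := by
    rw [← hn]; exact div_neg_of_neg_of_pos (by linarith) hγγ
  have hμr : θ - (n : ℝ) • γ ∈ R.roots := by
    have := R.reflect_mem θ hθr γ hγr
    rwa [hn] at this
  obtain ⟨g, hg⟩ := R.pos_combo γ hγ
  obtain ⟨t, ht⟩ := R.pos_combo θ hθ
  have hγ0 : γ ≠ 0 := R.root_ne_zero hγr
  have t0 : V → ℕ := fun _ => 0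
  rcases R.pos_or_neg _ hμr with hμp | hμp
  · -- μ = θ - n•γ positive : contradicts the highestness of θ
    obtain ⟨e, he⟩ := hhigh _ hμp
    have h1 : ∑ α ∈ R.simples, (e α : ℝ) • α = (n : ℝ) • γ := by
      linear_combination (norm := module) -he
    have key : ∑ α ∈ R.simples, ((e α : ℝ) + ((fun _ => 0 : V → ℕ) α : ℝ)
        + (-(n:ℝ)) * (g α : ℝ)) • α = 0 := by
      rw [split3, h1, ← hg]
      simp
    have hz := R.coeffs_zero _ key
    have hgz := forced_zero R hnneg e (fun _ => 0) g (by simpa using hz)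
    apply hγ0
    rw [hg]
    exact Finset.sum_eq_zero fun α hα => by rw [hgz α hα, zero_smul]
  · -- -μ positive : contradicts linear independence
    obtain ⟨d, hd⟩ := R.pos_combo _ hμp
    have h1 : ∑ α ∈ R.simples, (d α : ℝ) • α = -θ + (n : ℝ) • γ := by
      linear_combination (norm := module) -hd
    have key : ∑ α ∈ R.simples, ((d α : ℝ) + (t α : ℝ)
        + (-(n:ℝ)) * (g α : ℝ)) • α = 0 := by
      rw [split3, h1, ← ht, ← hg]
      module
    have hz := R.coeffs_zero _ key
    have hgz := forced_zero R hnneg d t g (by simpa using hz)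
    apply hγ0
    rw [hg]
    exact Finset.sum_eq_zero fun α hα => by rw [hgz α hα, zero_smul]

private lemma copair_self (R : RootSystemData V) {θ : V} (hθ : θ ∈ R.roots) :
    copair θ θ = 2 := by
  have h := R.root_inner_self_pos hθ
  rw [copair, mul_div_assoc, div_self (ne_of_gt h), mul_one]

/-- A positive root pairs with `θ∨` to at most `2`. -/
private lemma copair_le_two (R : RootSystemData V) (θ : V) (hθ : θ ∈ R.pos)
    (hhigh : ∀ γ ∈ R.pos, ∃ c : V → ℕ, θ = γ + ∑ α ∈ R.simples, (c α : ℝ) • α)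
    {γ : V} (hγ : γ ∈ R.pos) : copair θ γ ≤ 2 := by
  have hθθ : 0 < (inner ℝ θ θ : ℝ) := R.root_inner_self_pos (R.pos_subset hθ)
  obtain ⟨k, hk⟩ := hhigh γ hγ
  have expand : (inner ℝ (γ + ∑ α ∈ R.simples, (k α : ℝ) • α) θ : ℝ)
      = (inner ℝ γ θ : ℝ) + ∑ α ∈ R.simples, (k α : ℝ) * (inner ℝ α θ : ℝ) := by
    rw [inner_add_left, inner_nat_combo]
  rw [← hk] at expand
  have hterm : 0 ≤ ∑ α ∈ R.simples, (k α : ℝ) * (inner ℝ α θ : ℝ) :=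
    Finset.sum_nonneg fun α hα => mul_nonneg (Nat.cast_nonneg _)
      (posA R θ hθ hhigh α (R.simples_subset hα))
  have hle : (inner ℝ γ θ : ℝ) ≤ (inner ℝ θ θ : ℝ) := by linarith
  rw [copair, div_le_iff₀ hθθ]
  linarith

/-- The only positive root pairing with `θ∨` to `2` is `θ` itself. -/
private lemma copair_eq_two (R : RootSystemData V) (θ : V) (hθ : θ ∈ R.pos)
    (hhigh : ∀ γ ∈ R.pos, ∃ c : V → ℕ, θ = γ + ∑ α ∈ R.simples, (c α : ℝ) • α)
    {γ : V} (hγ : γ ∈ R.pos) (h2 : copair θ γ = 2) : γ = θ := by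
  have hθr := R.pos_subset hθ
  have hγr := R.pos_subset hγ
  have hθθ : 0 < (inner ℝ θ θ : ℝ) := R.root_inner_self_pos hθr
  have hip : (inner ℝ γ θ : ℝ) = (inner ℝ θ θ : ℝ) := by
    rw [copair, div_eq_iff (ne_of_gt hθθ)] at h2
    linarith
  -- μ := 2•θ - γ is a root
  have href := R.reflect_mem γ hγr θ hθr
  have hcoef : 2 * (inner ℝ γ θ : ℝ) / (inner ℝ θ θ : ℝ) = 2 := by
    rw [hip, mul_div_assoc, div_self (ne_of_gt hθθ), mul_one]
  rw [hcoef] at href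
  have hμr : (2:ℝ) • θ - γ ∈ R.roots := by
    have := R.neg_mem _ href
    have hrw : -(γ - (2:ℝ) • θ) = (2:ℝ) • θ - γ := by module
    rwa [hrw] at this
  have hμθ : (inner ℝ ((2:ℝ) • θ - γ) θ : ℝ) = (inner ℝ θ θ : ℝ) := by
    rw [inner_sub_left, real_inner_smul_left, hip]; ring
  have hμp : (2:ℝ) • θ - γ ∈ R.pos := by
    rcases R.pos_or_neg _ hμr with h | h
    · exact h
    · exfalso
      have hn := posA R θ hθ hhigh _ h
      rw [inner_neg_left, hμθ] at hn
      linarith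
  obtain ⟨e, he⟩ := hhigh _ hμp
  obtain ⟨k, hk⟩ := hhigh γ hγ
  have h1 : ∑ α ∈ R.simples, (e α : ℝ) • α = γ - θ := by
    linear_combination (norm := module) -he
  have h2' : ∑ α ∈ R.simples, (k α : ℝ) • α = θ - γ := by
    linear_combination (norm := module) -hk
  have key : ∑ α ∈ R.simples, ((e α : ℝ) + (k α : ℝ)) • α = 0 := by
    rw [split2, h1, h2']; module
  have hz := R.coeffs_zero _ key
  have hkz : ∀ α ∈ R.simples, (k α : ℝ) = 0 := by
    intro α hα
    have := hz α hα
    have h3 : (0:ℝ) ≤ (e α : ℝ) := Nat.cast_nonneg _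
    have h4 : (0:ℝ) ≤ (k α : ℝ) := Nat.cast_nonneg _
    linarith
  have : θ = γ := by
    rw [hk, Finset.sum_eq_zero fun α hα => by rw [hkz α hα, zero_smul], add_zero]
  exact this.symm

/-- The pairing of any root with `θ∨` is an integer. -/
private lemma copair_int (R : RootSystemData V) {θ γ : V} (hθ : θ ∈ R.roots)
    (hγ : γ ∈ R.roots) : ∃ n : ℤ, copair θ γ = (n : ℝ) :=
  R.crystallographic γ hγ θ hθ

/-- Simple-root reflections permute the other positive roots. -/
private lemma refl_pos (R : RootSystemData V) {α : V} (hα : α ∈ R.simples)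
    {γ : V} (hγ : γ ∈ R.pos) (hne : γ ≠ α) :
    γ - copair α γ • α ∈ R.pos := by
  classical
  have hαr := R.pos_subset (R.simples_subset hα)
  have hγr := R.pos_subset hγ
  have hroot : γ - copair α γ • α ∈ R.roots := R.reflect_mem γ hγr α hαr
  rcases R.pos_or_neg _ hroot with h | h
  · exact h
  · exfalso
    obtain ⟨d, hd⟩ := R.pos_combo _ h
    obtain ⟨g, hg⟩ := R.pos_combo γ hγ
    set f : V → ℝ := fun β => (g β : ℝ) + (d β : ℝ) - (if β = α then copair α γ else 0)
      with hf
    have key : ∑ β ∈ R.simples, f β • β = 0 := by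
      have hsplit : ∑ β ∈ R.simples, f β • β
          = (∑ β ∈ R.simples, (g β : ℝ) • β) + (∑ β ∈ R.simples, (d β : ℝ) • β)
            - ∑ β ∈ R.simples, (if β = α then copair α γ else 0) • β := by
        rw [← Finset.sum_add_distrib, ← Finset.sum_sub_distrib]
        refine Finset.sum_congr rfl fun β _ => ?_
        simp only [hf]
        rw [sub_smul, add_smul]
      have hite : ∑ β ∈ R.simples, (if β = α then copair α γ else 0) • β
          = copair α γ • α := by
        rw [Finset.sum_eq_single α]
        · simp
        · intro b _ hb; simp [hb]
        · intro hb; exact absurd hα hb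
      rw [hsplit, hite, ← hg, ← hd]
      module
    have hz := R.coeffs_zero _ key
    have hgz : ∀ β ∈ R.simples, β ≠ α → (g β : ℝ) = 0 := by
      intro β hβ hbne
      have := hz β hβ
      rw [hf] at this
      simp only [if_neg hbne] at this
      have h3 : (0:ℝ) ≤ (g β : ℝ) := Nat.cast_nonneg _
      have h4 : (0:ℝ) ≤ (d β : ℝ) := Nat.cast_nonneg _
      linarith
    -- hence γ = (g α) • α
    have hγα : γ = (g α : ℝ) • α := by
      rw [hg, Finset.sum_eq_single α]
      · intro b hb hbne; rw [hgz b hb hbne, zero_smul]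
      · intro hb; exact absurd hα hb
    have hred := R.reduced α hαr (g α : ℝ) (by rw [← hγα]; exact hγr)
    rcases hred with h1 | h1
    · apply hne; rw [hγα, h1, one_smul]
    · have : (0:ℝ) ≤ (g α : ℝ) := Nat.cast_nonneg _
      linarith

/-- The sum over all positive roots of the pairings with a fixed simple coroot is `2`. -/
private lemma sum_copair_simple (R : RootSystemData V) {α : V} (hα : α ∈ R.simples) :
    ∑ γ ∈ R.pos, copair α γ = 2 := by
  classical
  have hαp := R.simples_subset hα
  have hαr := R.pos_subset hαp
  have hαα : 0 < (inner ℝ α α : ℝ) := R.root_inner_self_pos hαr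
  have hα0 : α ≠ 0 := R.root_ne_zero hαr
  -- the reflection map
  set r : V → V := fun γ => γ - copair α γ • α with hr
  have hinner : ∀ γ : V, (inner ℝ (r γ) α : ℝ) = -(inner ℝ γ α : ℝ) := by
    intro γ
    rw [hr]
    simp only []
    rw [inner_sub_left, real_inner_smul_left, copair]
    field_simp
    ring
  have hcop : ∀ γ : V, copair α (r γ) = -(copair α γ) := by
    intro γ
    rw [copair, copair, hinner γ]
    ring
  have hrr : ∀ γ : V, r (r γ) = γ := by
    intro γ
    rw [hr]
    simp only []
    rw [hcop γ]
    module
  have hrα : r α = -α := by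
    rw [hr]
    simp only []
    rw [copair_self R hαr]
    module
  -- split off α
  rw [← Finset.add_sum_erase _ _ hαp, copair_self R hαr]
  have hzero : ∑ γ ∈ R.pos.erase α, copair α γ = 0 := by
    apply Finset.sum_involution (fun γ _ => r γ)
    · intro γ _
      rw [hcop γ]; ring
    · intro γ _ hne heq
      apply hne
      have : copair α γ • α = 0 := by
        have h2 : γ - copair α γ • α = γ := heq
        exact sub_eq_self.mp h2
      rcases smul_eq_zero.mp this with h | h
      · exact h
      · exact absurd h hα0
    · intro γ hγ
      have hγp : γ ∈ R.pos := Finset.mem_of_mem_erase hγ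
      have hγne : γ ≠ α := Finset.ne_of_mem_erase hγ
      have hrp : r γ ∈ R.pos := refl_pos R hα hγp hγne
      apply Finset.mem_erase.mpr
      refine ⟨?_, hrp⟩
      intro heq
      have : γ = -α := by rw [← hrr γ, heq, hrα]
      apply R.pos_neg_disjoint γ hγp
      rw [this, neg_neg]
      exact hαp
    · intro γ _
      exact hrr γ
  rw [hzero, add_zero]

end CardLevelOneAux

/-- Let `Δ` be an irreducible root system with highest root `θ` and dual Coxeter number
`h*` (so that `h* − 1` is the height of `θ∨` in the dual root system). Then the number of
roots `γ` with `(γ, θ∨) = 1` equals `2h* − 4`. -/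
theorem card_levelOne_eq (R : RootSystemData V) (hirr : R.Irreducible)
    (θ : V) (hθ : θ ∈ R.pos)
    (hhigh : ∀ γ ∈ R.pos, ∃ c : V → ℕ, θ = γ + ∑ α ∈ R.simples, (c α : ℝ) • α)
    (hstar : ℕ) (hstar2 : 2 ≤ hstar) (c : V → ℕ)
    (hc : (2 / (inner ℝ θ θ : ℝ)) • θ
        = ∑ α ∈ R.simples, (c α : ℝ) • ((2 / (inner ℝ α α : ℝ)) • α))
    (hsum : ∑ α ∈ R.simples, c α = hstar - 1) :
    (levelOne R θ).ncard = 2 * hstar - 4 := by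
  classical
  have hθr := R.pos_subset hθ
  have hθθ : 0 < (inner ℝ θ θ : ℝ) := R.root_inner_self_pos hθr
  -- decompose the pairing with `θ∨` into pairings with the simple coroots
  have hdecomp : ∀ γ : V, copair θ γ = ∑ α ∈ R.simples, (c α : ℝ) * copair α γ := by
    intro γ
    have h1 : copair θ γ = (inner ℝ γ ((2 / (inner ℝ θ θ : ℝ)) • θ) : ℝ) := by
      rw [real_inner_smul_right, copair]; ring
    rw [h1, hc, inner_sum]
    refine Finset.sum_congr rfl fun α hα => ?_
    rw [real_inner_smul_right, real_inner_smul_right, copair]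
    ring
  -- the total pairing of the positive roots with `θ∨` is `2(h* − 1)`
  have hsum1 : ∑ γ ∈ R.pos, copair θ γ = 2 * ((hstar : ℝ) - 1) := by
    calc ∑ γ ∈ R.pos, copair θ γ
        = ∑ γ ∈ R.pos, ∑ α ∈ R.simples, (c α : ℝ) * copair α γ :=
          Finset.sum_congr rfl fun γ _ => hdecomp γ
      _ = ∑ α ∈ R.simples, ∑ γ ∈ R.pos, (c α : ℝ) * copair α γ := Finset.sum_comm
      _ = ∑ α ∈ R.simples, (c α : ℝ) * 2 := by
          refine Finset.sum_congr rfl fun α hα => ?_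
          rw [← Finset.mul_sum, sum_copair_simple R hα]
      _ = 2 * ((hstar : ℝ) - 1) := by
          rw [← Finset.sum_mul]
          have h1 : (∑ α ∈ R.simples, (c α : ℝ)) = ((hstar - 1 : ℕ) : ℝ) := by
            rw [← Nat.cast_sum, hsum]
          have h2 : ((hstar - 1 : ℕ) : ℝ) = (hstar : ℝ) - 1 := by
            have : 1 ≤ hstar := le_trans (by norm_num) hstar2
            rw [Nat.cast_sub this, Nat.cast_one]
          rw [h1, h2]; ring
  set P1 := R.pos.filter (fun γ => copair θ γ = 1) with hP1
  have hsplit : (∑ γ ∈ P1, copair θ γ)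
      + ∑ γ ∈ R.pos.filter (fun γ => ¬ copair θ γ = 1), copair θ γ
      = ∑ γ ∈ R.pos, copair θ γ :=
    Finset.sum_filter_add_sum_filter_not _ _ _
  have hP1sum : ∑ γ ∈ P1, copair θ γ = (P1.card : ℝ) := by
    rw [Finset.sum_congr rfl (fun γ hγ => (Finset.mem_filter.mp hγ).2),
      Finset.sum_const, nsmul_eq_mul, mul_one]
  have hrest : ∑ γ ∈ R.pos.filter (fun γ => ¬ copair θ γ = 1), copair θ γ = 2 := by
    rw [Finset.sum_eq_single θ]
    · exact copair_self R hθr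
    · intro b hb hbθ
      obtain ⟨hbpos, hbne1⟩ := Finset.mem_filter.mp hb
      obtain ⟨n, hn⟩ := copair_int R hθr (R.pos_subset hbpos)
      have h0 : 0 ≤ copair θ b := by
        rw [copair]
        exact div_nonneg (by linarith [posA R θ hθ hhigh b hbpos]) (le_of_lt hθθ)
      have h2 : copair θ b ≤ 2 := copair_le_two R θ hθ hhigh hbpos
      have hne2 : copair θ b ≠ 2 := fun h => hbθ (copair_eq_two R θ hθ hhigh hbpos h)
      rw [hn] at h0 h2 hbne1 hne2 ⊢
      have hn0 : 0 ≤ n := by exact_mod_cast h0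
      have hn2 : n ≤ 2 := by exact_mod_cast h2
      have hne1' : n ≠ 1 := fun h => hbne1 (by rw [h, Int.cast_one])
      have hne2' : n ≠ 2 := fun h => hne2 (by rw [h]; norm_num)
      have : n = 0 := by omega
      rw [this, Int.cast_zero]
    · intro hθnot
      exact absurd (Finset.mem_filter.mpr
        ⟨hθ, by rw [copair_self R hθr]; norm_num⟩) hθnot
  have hcard : (P1.card : ℝ) = 2 * (hstar : ℝ) - 4 := by
    rw [hP1sum, hrest, hsum1] at hsplit
    linarith
  -- every root pairing to `1` with `θ∨` is positive, hence `levelOne = P1`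
  have hset : levelOne R θ = ↑P1 := by
    ext γ
    simp only [levelOne, Set.mem_setOf_eq, Finset.mem_coe, hP1, Finset.mem_filter]
    constructor
    · rintro ⟨hγr, hγ1⟩
      refine ⟨?_, hγ1⟩
      rcases R.pos_or_neg γ hγr with h | h
      · exact h
      · exfalso
        have hnn := posA R θ hθ hhigh _ h
        rw [inner_neg_left] at hnn
        have hle : copair θ γ ≤ 0 := by
          rw [copair]
          exact div_nonpos_of_nonpos_of_nonneg (by linarith) (le_of_lt hθθ)
        rw [hγ1] at hle
        linarith
    · rintro ⟨hγp, hγ1⟩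
      exact ⟨R.pos_subset hγp, hγ1⟩
  rw [hset, Set.ncard_coe_finset]
  have h4 : 4 ≤ 2 * hstar := by omega
  have hc2 : ((2 * hstar - 4 : ℕ) : ℝ) = 2 * (hstar : ℝ) - 4 := by
    rw [Nat.cast_sub h4]
    push_cast
    ring
  exact Nat.cast_injective (R := ℝ) (hcard.trans hc2.symm)
end
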